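/- arXiv:1204.6233 — 5 statements merged into one kernel-verified Lean document; each statement's English description precedes it below -/
import Mathlib

section
/- Let t ≥ 0 be an integer, G a graph, W a connected subgraph of G of maximum degree at most 3, and Z ⊆ V(G) \ V(W) a set of vertices such that every z ∈ Z has a neighbor in V(W) and |Z| ≥ nb(t). Then there exists a valid obstruction-template (B(W), P, R) of W with respect to Z and G, i.e., a partition P of V(W) into regions each inducing a connected subgraph of W, a finite set Q_W of new vertices, a bipartite graph B(W) with independent sides Z and Q_W, and a map R : Q_W → P, satisfying: (1) for each q ∈ Q_W, N_{B(W)}(q) ⊆ N_G(R(q)); (2) each q ∈ Q_W has a private neighbor z ∈ N_{B(W)}(q), i.e., no other q' ∈ N_{B(W)}(z) satisfies R(q') = R(q); (3) every z ∈ Z has degree at least 1 in B(W); (4) every q ∈ Q_W has degree at least nb(t) and at most 3·nb(t) in B(W); (5) for each q ∈ Q_W there is at most one vertex v ∈ R(q) with N_G(v) ∩ Z ⊄ N_{B(W)}(q). -/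
/-- `twLE G t` means the treewidth of `G` is at most `t`. -/
def twLE {α : Type} (G : SimpleGraph α) (t : ℕ) : Prop :=
  ∃ (ι : Type) (T : SimpleGraph ι) (bag : ι → Finset α),
    T.IsTree ∧
    (∀ u v : α, G.Adj u v → ∃ i, u ∈ bag i ∧ v ∈ bag i) ∧
    (∀ v : α, (T.induce {i | v ∈ bag i}).Connected) ∧
    (∀ i, (bag i).card ≤ t + 1)

def wallRel (r : ℕ) (p q : ℕ × ℕ) : Prop :=
  1 ≤ p.1 ∧ p.1 ≤ r ∧ 1 ≤ p.2 ∧ p.2 ≤ r ∧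
  1 ≤ q.1 ∧ q.1 ≤ r ∧ 1 ≤ q.2 ∧ q.2 ≤ r ∧
  ((p.2 = q.2 ∧ q.1 = p.1 + 1) ∨ (p.1 = q.1 ∧ q.2 = p.2 + 1 ∧ Even (p.1 + p.2)))

def wallGraph (r : ℕ) : SimpleGraph (ℕ × ℕ) := SimpleGraph.fromRel (wallRel r)

def wallVerts (r : ℕ) : Set (ℕ × ℕ) := {p | 1 ≤ p.1 ∧ p.1 ≤ r ∧ 1 ≤ p.2 ∧ p.2 ≤ r}

/-- The `r`-wall. -/
def Wall (r : ℕ) : SimpleGraph (wallVerts r) := (wallGraph r).induce (wallVerts r)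

/-- `W` is (exactly) a subdivision of `H`. -/
def IsSubdivisionOf {γ β : Type} (W : SimpleGraph γ) (H : SimpleGraph β) : Prop :=
  ∃ (b : β → γ) (p : ∀ u v : β, H.Adj u v → W.Walk (b u) (b v)),
    Function.Injective b ∧
    (∀ (u v : β) (h : H.Adj u v), (p u v h).IsPath) ∧
    (∀ (u v : β) (h : H.Adj u v), p v u h.symm = (p u v h).reverse) ∧
    (∀ (u v : β) (h : H.Adj u v) (x : β), b x ∈ (p u v h).support → x = u ∨ x = v) ∧
    (∀ (u v : β) (h : H.Adj u v) (u' v' : β) (h' : H.Adj u' v'), s(u, v) ≠ s(u', v') →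
      ∀ w : γ, w ∈ (p u v h).support → w ∈ (p u' v' h').support → w = b u ∨ w = b v) ∧
    (∀ w : γ, ∃ (u v : β) (h : H.Adj u v), w ∈ (p u v h).support) ∧
    (∀ e ∈ W.edgeSet, ∃ (u v : β) (h : H.Adj u v), e ∈ (p u v h).edges)

/-- `G` contains `H` as a topological minor. -/
def containsSubdivision {α β : Type} (G : SimpleGraph α) (H : SimpleGraph β) : Prop :=
  ∃ W : G.Subgraph, IsSubdivisionOf W.coe H

noncomputable def nb (t : ℕ) : ℕ := ⌈(16 : ℝ) * ((t : ℝ) + 2) * Real.logb 2 ((t : ℝ) + 2)⌉₊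
noncomputable def sameF (k t : ℕ) : ℕ := 3 * (nb t) ^ 2 * t * 2 ^ (2 * k)
noncomputable def obsF (k t : ℕ) : ℕ := 2 ^ k * sameF k t + k
noncomputable def wallF (k t : ℕ) : ℕ := (2 * t + 2) * (1 + ⌈Real.sqrt (obsF k t)⌉₊)

structure CNF (V : Type) where
  ι : Type
  cls : Finset ι
  lit : ι → Finset (V × Bool)
  ok : ∀ i ∈ cls, ∀ v : V, ¬((v, true) ∈ lit i ∧ (v, false) ∈ lit i)

def CNF.vars {V : Type} [DecidableEq V] (F : CNF V) : Finset V :=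
  F.cls.biUnion (fun i => (F.lit i).image Prod.fst)

def CNF.reduce {V : Type} [DecidableEq V] (F : CNF V) (X : Finset V) (τ : V → Bool) : CNF V where
  ι := F.ι
  cls := F.cls.filter (fun i => ∀ l ∈ F.lit i, l.1 ∈ X → τ l.1 ≠ l.2)
  lit := fun i => (F.lit i).filter (fun l => l.1 ∉ X)
  ok := by
    intro i hi v hv
    exact F.ok i (Finset.mem_of_mem_filter i hi) v
      ⟨(Finset.mem_filter.mp hv.1).1, (Finset.mem_filter.mp hv.2).1⟩

def CNF.inc {V : Type} (F : CNF V) : SimpleGraph (V ⊕ F.ι) :=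
  SimpleGraph.fromRel (fun a b =>
    match a, b with
    | Sum.inl x, Sum.inr i => i ∈ F.cls ∧ ((x, true) ∈ F.lit i ∨ (x, false) ∈ F.lit i)
    | _, _ => False)

/-- The vertices of `inc F` surviving the application of the partial assignment `τ` on `X`. -/
def CNF.surv {V : Type} (F : CNF V) (X : Finset V) (τ : V → Bool) : Set (V ⊕ F.ι) :=
  {a | match a with
       | Sum.inl x => x ∉ X
       | Sum.inr i => ∀ l ∈ F.lit i, l.1 ∈ X → τ l.1 ≠ l.2}

def CNF.strongBackdoor {V : Type} [DecidableEq V] (F : CNF V) (t : ℕ) (B : Finset V) : Prop :=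
  B ⊆ F.vars ∧ ∀ τ : V → Bool, twLE (F.reduce B τ).inc t

def CNF.delete {V : Type} [DecidableEq V] (F : CNF V) (B : Finset V) : CNF V where
  ι := F.ι
  cls := F.cls
  lit := fun i => (F.lit i).filter (fun l => l.1 ∉ B)
  ok := by
    intro i hi v hv
    exact F.ok i hi v ⟨(Finset.mem_filter.mp hv.1).1, (Finset.mem_filter.mp hv.2).1⟩

noncomputable def CNF.count {V : Type} [DecidableEq V] (F : CNF V) : ℕ :=
  Nat.card {σ : {x // x ∈ F.vars} → Bool //
    ∀ i ∈ F.cls, ∃ l ∈ F.lit i, ∃ h : l.1 ∈ F.vars, σ ⟨l.1, h⟩ = l.2}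

def ValidOT {α κ : Type} (G : SimpleGraph α) (W : G.Subgraph) (Z : Finset α) (t : ℕ)
    (Q : Finset κ) (N : κ → Finset α) (P : Set (Set α)) (R : κ → Set α) : Prop :=
  (∀ A ∈ P, A ⊆ W.verts ∧ (W.induce A).Connected) ∧
  (∀ A ∈ P, ∀ A' ∈ P, A ≠ A' → Disjoint A A') ∧
  (⋃ A ∈ P, A) = W.verts ∧
  (∀ q ∈ Q, R q ∈ P) ∧
  (∀ q ∈ Q, (N q : Set α) ⊆ (Z : Set α)) ∧
  (∀ q ∈ Q, ∀ z ∈ N q, z ∉ R q ∧ ∃ w ∈ R q, G.Adj z w) ∧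
  (∀ q ∈ Q, ∃ z ∈ N q, ∀ q' ∈ Q, q' ≠ q → R q' = R q → z ∉ N q') ∧
  (∀ z ∈ Z, ∃ q ∈ Q, z ∈ N q) ∧
  (∀ q ∈ Q, nb t ≤ (N q).card ∧ (N q).card ≤ 3 * nb t) ∧
  (∀ q ∈ Q, ∀ v ∈ R q, ∀ v' ∈ R q,
    (∃ z ∈ Z, G.Adj v z ∧ z ∉ N q) → (∃ z ∈ Z, G.Adj v' z ∧ z ∉ N q) → v = v')

def HasMinor {α β : Type} (G : SimpleGraph α) (H : SimpleGraph β) : Prop :=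
  ∃ C : β → Set α,
    (∀ u, (C u).Nonempty) ∧
    (∀ u, (G.induce (C u)).Connected) ∧
    (∀ u v, u ≠ v → Disjoint (C u) (C v)) ∧
    (∀ u v, H.Adj u v → ∃ a ∈ C u, ∃ b ∈ C v, G.Adj a b)
section OT
open scoped Classical
variable {α : Type}

noncomputable def nbrF (G : SimpleGraph α) (Z : Finset α) (A : Set α) : Finset α :=
  Z.filter (fun z => ∃ a ∈ A, G.Adj z a)

variable {G : SimpleGraph α} {Z : Finset α}

lemma nbrF_subset (A : Set α) : nbrF G Z A ⊆ Z := Finset.filter_subset _ _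

lemma mem_nbrF {A : Set α} {z : α} : z ∈ nbrF G Z A ↔ z ∈ Z ∧ ∃ a ∈ A, G.Adj z a := by
  simp [nbrF]

lemma nbrF_mono {A B : Set α} (h : A ⊆ B) : nbrF G Z A ⊆ nbrF G Z B := by
  intro z hz
  rw [mem_nbrF] at hz ⊢
  obtain ⟨hzZ, a, ha, hadj⟩ := hz
  exact ⟨hzZ, a, h ha, hadj⟩

lemma nbrF_union (A B : Set α) : nbrF G Z (A ∪ B) = nbrF G Z A ∪ nbrF G Z B := by
  ext z
  simp only [Finset.mem_union, mem_nbrF]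
  constructor
  · rintro ⟨hz, a, (ha | ha), hadj⟩
    · exact Or.inl ⟨hz, a, ha, hadj⟩
    · exact Or.inr ⟨hz, a, ha, hadj⟩
  · rintro (⟨hz, a, ha, hadj⟩ | ⟨hz, a, ha, hadj⟩)
    · exact ⟨hz, a, Or.inl ha, hadj⟩
    · exact ⟨hz, a, Or.inr ha, hadj⟩

lemma nbrF_empty : nbrF G Z (∅ : Set α) = ∅ := by
  ext z; simp [mem_nbrF]

lemma nbrF_union_card (A B : Set α) :
    (nbrF G Z (A ∪ B)).card ≤ (nbrF G Z A).card + (nbrF G Z B).card := by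
  rw [nbrF_union]; exact Finset.card_union_le _ _

def connIn (W : G.Subgraph) (A : Set α) (x y : α) : Prop :=
  Relation.ReflTransGen (fun a b => a ∈ A ∧ b ∈ A ∧ W.Adj a b) x y

variable {W : G.Subgraph}

lemma connIn_mono {A B : Set α} (h : A ⊆ B) {x y : α} (hc : connIn W A x y) :
    connIn W B x y :=
  Relation.ReflTransGen.mono (r := fun a b => a ∈ A ∧ b ∈ A ∧ W.Adj a b)
    (p := fun a b => a ∈ B ∧ b ∈ B ∧ W.Adj a b) (fun _ _ ⟨ha, hb, hadj⟩ => ⟨h ha, h hb, hadj⟩) x y hc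

lemma connIn_symm {A : Set α} {x y : α} (hc : connIn W A x y) : connIn W A y x := by
  have hsym : Symmetric (fun a b => a ∈ A ∧ b ∈ A ∧ W.Adj a b) :=
    fun a b ⟨ha, hb, hadj⟩ => ⟨hb, ha, hadj.symm⟩
  haveI : Std.Symm (fun a b => a ∈ A ∧ b ∈ A ∧ W.Adj a b) := ⟨hsym⟩
  exact Std.Symm.symm (r := Relation.ReflTransGen (fun a b => a ∈ A ∧ b ∈ A ∧ W.Adj a b)) x y hc

def AllConn (W : G.Subgraph) (A : Set α) : Prop := ∀ x ∈ A, ∀ y ∈ A, connIn W A x y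

lemma allConn_singleton (v : α) : AllConn W ({v} : Set α) := by
  intro x hx y hy
  rw [Set.mem_singleton_iff] at hx hy
  subst hx; subst hy
  exact Relation.ReflTransGen.refl

lemma allConn_union {A B : Set α} (hA : AllConn W A) (hB : AllConn W B)
    {a b : α} (ha : a ∈ A) (hb : b ∈ B) (hadj : W.Adj a b) : AllConn W (A ∪ B) := by
  have hab : connIn W (A ∪ B) a b :=
    Relation.ReflTransGen.single ⟨Or.inl ha, Or.inr hb, hadj⟩
  have step : ∀ x ∈ A ∪ B, connIn W (A ∪ B) x a := by
    intro x hx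
    rcases hx with hx | hx
    · exact connIn_mono Set.subset_union_left (hA x hx a ha)
    · exact (connIn_mono Set.subset_union_right (hB x hx b hb)).trans (connIn_symm hab)
  intro x hx y hy
  exact (step x hx).trans (connIn_symm (step y hy))

lemma allConn_to_connected {A : Set α} (hne : A.Nonempty)
    (h : AllConn W A) : (W.induce A).Connected := by
  rw [SimpleGraph.Subgraph.connected_iff]
  refine ⟨⟨?_⟩, hne⟩
  rintro ⟨x, hx⟩ ⟨y, hy⟩
  have key : ∀ y, connIn W A x y → ∀ (hy : y ∈ (W.induce A).verts),
      (W.induce A).coe.Reachable ⟨x, hx⟩ ⟨y, hy⟩ := by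
    intro y hc
    induction hc with
    | refl => intro _; exact SimpleGraph.Reachable.refl _
    | tail _hab hrel ih =>
      obtain ⟨hb, hcc, hadj⟩ := hrel
      intro hyy
      refine (ih hb).trans ?_
      exact SimpleGraph.Adj.reachable (by
        rw [SimpleGraph.Subgraph.coe_adj, SimpleGraph.Subgraph.induce_adj]
        exact ⟨hb, hcc, hadj⟩)
  exact key y (h x hx y hy) hy

lemma connected_to_allConn (h : W.Connected) : AllConn W W.verts := by
  intro x hx y hy
  obtain ⟨p⟩ : W.coe.Reachable ⟨x, hx⟩ ⟨y, hy⟩ := h.coe.preconnected _ _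
  have key : ∀ (u v : W.verts) (_ : W.coe.Walk u v), connIn W W.verts u.1 v.1 := by
    intro u v p
    induction p with
    | nil => exact Relation.ReflTransGen.refl
    | @cons a b c hadj _p ih =>
      exact Relation.ReflTransGen.head
        ⟨a.2, b.2, (SimpleGraph.Subgraph.coe_adj _ _ _).mp hadj⟩ ih
  exact key _ _ p

/-- The connected component (class) of `y` inside `U`. -/
def cls (W : G.Subgraph) (U : Set α) (y : α) : Set α := {v | v ∈ U ∧ connIn W U y v}

lemma mem_cls_self {U : Set α} {y : α} (hy : y ∈ U) : y ∈ cls W U y :=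
  ⟨hy, Relation.ReflTransGen.refl⟩

lemma cls_subset {U : Set α} {y : α} : cls W U y ⊆ U := fun _ h => h.1

lemma connIn_cls {U : Set α} {y : α} : ∀ {z}, connIn W U y z → connIn W (cls W U y) y z := by
  intro z hc
  induction hc with
  | refl => exact Relation.ReflTransGen.refl
  | @tail b c hyb hrel ih =>
    exact ih.tail ⟨⟨hrel.1, hyb⟩, ⟨hrel.2.1, hyb.tail hrel⟩, hrel.2.2⟩

lemma allConn_cls {U : Set α} {y : α} : AllConn W (cls W U y) := by
  intro x hx z hz
  exact (connIn_symm (connIn_cls hx.2)).trans (connIn_cls hz.2)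

/-- every vertex of `V0 \ {r}` connects within `V0 \ {r}` to a `W`-neighbor of `r`. -/
lemma exit_to_r {V0 : Set α} {r : α} :
    ∀ {a}, connIn W V0 a r → a ∈ V0 \ {r} →
      ∃ w ∈ V0 \ {r}, W.Adj r w ∧ connIn W (V0 \ {r}) a w := by
  intro a hc
  induction hc using Relation.ReflTransGen.head_induction_on with
  | refl => intro ha; exact absurd rfl ha.2
  | @head a c hrel hcr ih =>
    intro ha
    by_cases hcr' : c = r
    · subst hcr'
      exact ⟨a, ha, hrel.2.2.symm, Relation.ReflTransGen.refl⟩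
    · have hcU : c ∈ V0 \ {r} := ⟨hrel.2.1, hcr'⟩
      obtain ⟨w, hw, hadj, hcw⟩ := ih hcU
      exact ⟨w, hw, hadj, (Relation.ReflTransGen.single ⟨ha, hcU, hrel.2.2⟩).trans hcw⟩

/-- first exit of a connected set out of `P`. -/
lemma connIn_exit {V0 P : Set α} :
    ∀ {a b}, connIn W V0 a b → a ∈ P → b ∉ P →
      ∃ u ∈ P, ∃ w, w ∉ P ∧ w ∈ V0 ∧ W.Adj u w := by
  intro a b hc
  induction hc with
  | refl => intro ha hb; exact absurd ha hb
  | @tail c d hac hrel ih =>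
    intro ha hd
    by_cases hcP : c ∈ P
    · exact ⟨c, hcP, d, hd, hrel.2.1, hrel.2.2⟩
    · exact ih ha hcP

/-- the complement of a class of `V0 \ {r}` is still connected (all-conn). -/
lemma allConn_compl_cls {V0 : Set α} {r y : α} (hr : r ∈ V0)
    (hV0 : AllConn W V0) (hy : y ∈ V0 \ {r}) :
    AllConn W (V0 \ cls W (V0 \ {r}) y) := by
  set U := V0 \ {r} with hU
  set C := cls W U y with hC
  have hrC : r ∉ C := fun h => (cls_subset h).2 rfl
  have key : ∀ x ∈ V0 \ C, connIn W (V0 \ C) x r := by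
    intro x hx
    by_cases hxr : x = r
    · subst hxr; exact Relation.ReflTransGen.refl
    · have hxU : x ∈ U := ⟨hx.1, hxr⟩
      obtain ⟨w, hw, hadj, hxw⟩ := exit_to_r (hV0 x hx.1 r hr) hxU
      have hclsx : cls W U x ⊆ V0 \ C := by
        intro v hv
        refine ⟨hv.1.1, fun hvC => hx.2 ?_⟩
        exact ⟨hxU, hvC.2.trans (connIn_symm hv.2)⟩
      have hxw' : connIn W (V0 \ C) x w := connIn_mono hclsx (connIn_cls hxw)
      have hwC : w ∈ V0 \ C := hclsx ⟨hw, hxw⟩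
      exact hxw'.tail ⟨hwC, ⟨hr, hrC⟩, hadj.symm⟩
  intro x hx z hz
  exact (key x hx).trans (connIn_symm (key z hz))

/-- A good part: a connected region with a designated exceptional vertex. -/
def GoodPart (W : G.Subgraph) (G' : SimpleGraph α) (Z' : Finset α) (b bd : ℕ)
    (A : Set α) (x : α) : Prop :=
  x ∈ A ∧ AllConn W A ∧ b ≤ (nbrF G' Z' A).card ∧ (nbrF G' Z' (A \ {x})).card ≤ bd


lemma partL {G : SimpleGraph α} {W : G.Subgraph} {Z : Finset α} {b : ℕ}
    (hWfin : W.verts.Finite) (hWdeg : ∀ v : α, (W.neighborSet v).ncard ≤ 3) :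
    ∀ n : ℕ, ∀ V0 : Set α, V0.ncard ≤ n → V0 ⊆ W.verts →
    AllConn W V0 → ∀ r ∈ V0,
    ∃ (m : ℕ) (Af : ℕ → Set α) (xf : ℕ → α) (P : Set α),
      (∀ i < m, Af i ⊆ V0 ∧ GoodPart W G Z b (2*(b-1)) (Af i) (xf i)) ∧
      (∀ i < m, ∀ j < m, i ≠ j → Disjoint (Af i) (Af j)) ∧
      (∀ i < m, Disjoint (Af i) P) ∧
      (∀ v, v ∈ V0 ↔ v ∈ P ∨ ∃ i < m, v ∈ Af i) ∧
      r ∈ P ∧ P ⊆ V0 ∧ AllConn W P ∧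
      (nbrF G Z (P \ {r})).card ≤ (W.neighborSet r ∩ V0).ncard * (b - 1) := by
  intro n
  induction n using Nat.strong_induction_on with
  | _ n IH =>
  intro V0 hcard hsub hconn r hr
  rcases (V0 \ {r}).eq_empty_or_nonempty with hU | ⟨y, hyU⟩
  · -- V0 = {r}
    have hV0 : V0 = {r} := by
      apply Set.eq_of_subset_of_subset
      · intro x hx
        by_cases hxr : x = r
        · exact hxr
        · exact absurd (Set.eq_empty_iff_forall_notMem.mp hU x ⟨hx, hxr⟩) (fun h => h)
      · intro x hx; rw [Set.mem_singleton_iff] at hx; subst hx; exact hr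
    refine ⟨0, fun _ => ∅, fun _ => r, {r}, ?_, ?_, ?_, ?_, rfl, ?_, ?_, ?_⟩
    · intro i hi; omega
    · intro i hi; omega
    · intro i hi; omega
    · intro v; rw [hV0]; simp
    · rw [hV0]
    · exact allConn_singleton r
    · have : ({r} : Set α) \ {r} = ∅ := by simp
      rw [this, nbrF_empty]
      simp
  · have hV0fin : V0.Finite := hWfin.subset hsub
    set U := V0 \ {r} with hUdef
    set C := cls W U y with hCdef
    have hyC : y ∈ C := mem_cls_self hyU
    obtain ⟨w', hw'U, hadjrw', hyw'⟩ := exit_to_r (hconn y hyU.1 r hr) hyU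
    have hwC : w' ∈ C := ⟨hw'U, hyw'⟩
    have hCU : C ⊆ U := cls_subset
    have hCV0 : C ⊆ V0 := hCU.trans Set.diff_subset
    have hrC : r ∉ C := fun h => (hCU h).2 rfl
    have hCfin : C.Finite := hV0fin.subset hCV0
    have hcard1 : C.ncard < V0.ncard :=
      Set.ncard_lt_ncard ⟨hCV0, fun hsup => hrC (hsup hr)⟩ hV0fin
    -- first recursive call, on C rooted at w'
    obtain ⟨m1, Af1, xf1, P1, hgood1, hdisj1, hdisjP1, hunion1, hwP1, hP1sub, hP1conn, hbound1⟩ :=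
      IH C.ncard (lt_of_lt_of_le hcard1 hcard) C le_rfl (hCV0.trans hsub)
        allConn_cls w' hwC
    -- degree bound at w'
    have hNBfin : ∀ v : α, (W.neighborSet v).Finite := by
      intro v
      exact hWfin.subset (fun u hu => W.edge_vert (W.adj_symm hu))
    have hNW : (W.neighborSet w' ∩ C).ncard ≤ 2 := by
      have h1 : W.neighborSet w' ∩ C ⊆ W.neighborSet w' \ {r} :=
        fun v hv => ⟨hv.1, fun he => hrC (by rw [Set.mem_singleton_iff] at he; rw [← he]; exact hv.2)⟩
      have hr' : r ∈ W.neighborSet w' := hadjrw'.symm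
      calc (W.neighborSet w' ∩ C).ncard
          ≤ (W.neighborSet w' \ {r}).ncard := Set.ncard_le_ncard h1 (hNBfin w').diff
        _ = (W.neighborSet w').ncard - 1 := Set.ncard_diff_singleton_of_mem hr'
        _ ≤ 2 := by have := hWdeg w'; omega
    have hbound1' : (nbrF G Z (P1 \ {w'})).card ≤ 2 * (b - 1) :=
      le_trans hbound1 (Nat.mul_le_mul_right _ hNW)
    -- second recursive call, on V0 \ C rooted at r
    have hrV0' : r ∈ V0 \ C := ⟨hr, hrC⟩
    have hcard2 : (V0 \ C).ncard < V0.ncard :=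
      Set.ncard_lt_ncard ⟨Set.diff_subset, fun hsup => ((hsup (hCV0 hyC)).2 hyC)⟩ hV0fin
    obtain ⟨m2, Af2, xf2, P2, hgood2, hdisj2, hdisjP2, hunion2, hrP2, hP2sub, hP2conn, hbound2⟩ :=
      IH (V0 \ C).ncard (lt_of_lt_of_le hcard2 hcard) (V0 \ C) le_rfl
        ((Set.diff_subset).trans hsub) (allConn_compl_cls hr hconn hyU) r hrV0'
    -- neighbor counts at r
    set k := (W.neighborSet r ∩ V0).ncard with hkdef
    have hkfin : (W.neighborSet r ∩ V0).Finite := (hNBfin r).inter_of_left _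
    have hwk : w' ∈ W.neighborSet r ∩ V0 := ⟨hadjrw', hCV0 hwC⟩
    have hk1 : 1 ≤ k := by
      rw [hkdef]
      have := (Set.ncard_pos hkfin).mpr ⟨w', hwk⟩
      omega
    have hk2 : (W.neighborSet r ∩ (V0 \ C)).ncard ≤ k - 1 := by
      have h1 : W.neighborSet r ∩ (V0 \ C) ⊆ (W.neighborSet r ∩ V0) \ {w'} := by
        intro v hv
        refine ⟨⟨hv.1, hv.2.1⟩, fun he => ?_⟩
        rw [Set.mem_singleton_iff] at he
        exact hv.2.2 (he ▸ hwC)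
      calc (W.neighborSet r ∩ (V0 \ C)).ncard
          ≤ ((W.neighborSet r ∩ V0) \ {w'}).ncard := Set.ncard_le_ncard h1 hkfin.diff
        _ = k - 1 := by rw [Set.ncard_diff_singleton_of_mem hwk]
    have hbound2' : (nbrF G Z (P2 \ {r})).card ≤ (k - 1) * (b - 1) :=
      le_trans hbound2 (Nat.mul_le_mul_right _ hk2)
    have hdisjCV : Disjoint C (V0 \ C) := Set.disjoint_sdiff_right
    by_cases hfin1 : b ≤ (nbrF G Z P1).card
    · -- finish P1 as a part
      refine ⟨m1 + m2 + 1,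
        (fun i => if i < m1 then Af1 i else if i < m1 + m2 then Af2 (i - m1) else P1),
        (fun i => if i < m1 then xf1 i else if i < m1 + m2 then xf2 (i - m1) else w'),
        P2, ?_, ?_, ?_, ?_, hrP2, hP2sub.trans Set.diff_subset, hP2conn, ?_⟩
      · intro i hi
        by_cases h1 : i < m1
        · simp only [if_pos h1]
          obtain ⟨hs, hg⟩ := hgood1 i h1
          exact ⟨hs.trans hCV0, hg⟩
        · by_cases h2 : i < m1 + m2
          · simp only [if_neg h1, if_pos h2]
            obtain ⟨hs, hg⟩ := hgood2 (i - m1) (by omega)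
            exact ⟨hs.trans Set.diff_subset, hg⟩
          · simp only [if_neg h1, if_neg h2]
            exact ⟨hP1sub.trans hCV0, hwP1, hP1conn, hfin1, hbound1'⟩
      · intro i hi j hj hij
        have sub1 : ∀ l, l < m1 → Af1 l ⊆ C := fun l hl => (hgood1 l hl).1
        have sub2 : ∀ l, m1 ≤ l → l < m1 + m2 → Af2 (l - m1) ⊆ V0 \ C :=
          fun l hl hl' => (hgood2 (l - m1) (by omega)).1
        by_cases h1 : i < m1 <;> by_cases h2 : j < m1 <;>
          simp only [if_pos, if_neg, h1, h2] <;>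
          [skip; skip; skip; skip]
        · exact hdisj1 i h1 j h2 hij
        · by_cases h3 : j < m1 + m2
          · simp only [if_pos h3]
            exact (hdisjCV.mono (sub1 i h1) (sub2 j (by omega) h3))
          · simp only [if_neg h3]
            exact (hdisjP1 i h1)
        · by_cases h3 : i < m1 + m2
          · simp only [if_pos h3]
            exact (hdisjCV.mono (sub1 j h2) (sub2 i (by omega) h3)).symm
          · simp only [if_neg h3]
            exact (hdisjP1 j h2).symm
        · by_cases h3 : i < m1 + m2 <;> by_cases h4 : j < m1 + m2 <;>
            simp only [if_pos, if_neg, h3, h4]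
          · exact hdisj2 (i - m1) (by omega) (j - m1) (by omega) (by omega)
          · exact hdisjCV.symm.mono (sub2 i (by omega) h3) hP1sub
          · exact (hdisjCV.symm.mono (sub2 j (by omega) h4) hP1sub).symm
          · omega
      · intro i hi
        by_cases h1 : i < m1
        · simp only [if_pos h1]
          exact hdisjCV.mono ((hgood1 i h1).1) (hP2sub)
        · by_cases h2 : i < m1 + m2
          · simp only [if_neg h1, if_pos h2]
            exact hdisjP2 (i - m1) (by omega)
          · simp only [if_neg h1, if_neg h2]
            exact hdisjCV.mono hP1sub hP2sub
      · intro v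
        constructor
        · intro hv
          by_cases hvC : v ∈ C
          · rcases (hunion1 v).mp hvC with hP1 | ⟨i, hi, hAf⟩
            · exact Or.inr ⟨m1 + m2, by omega, by
                simp only [if_neg (show ¬(m1 + m2 < m1) by omega),
                  if_neg (show ¬(m1 + m2 < m1 + m2) by omega)]; exact hP1⟩
            · exact Or.inr ⟨i, by omega, by simp only [if_pos hi]; exact hAf⟩
          · rcases (hunion2 v).mp ⟨hv, hvC⟩ with hP2' | ⟨i, hi, hAf⟩
            · exact Or.inl hP2'
            · exact Or.inr ⟨m1 + i, by omega, by
                simp only [if_neg (show ¬(m1 + i < m1) by omega),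
                  if_pos (show m1 + i < m1 + m2 by omega), Nat.add_sub_cancel_left]
                exact hAf⟩
        · intro hv
          rcases hv with hP2' | ⟨i, hi, hAf⟩
          · exact Set.diff_subset (hP2sub hP2')
          · by_cases h1 : i < m1
            · simp only [if_pos h1] at hAf
              exact hCV0 ((hgood1 i h1).1 hAf)
            · by_cases h2 : i < m1 + m2
              · simp only [if_neg h1, if_pos h2] at hAf
                exact Set.diff_subset ((hgood2 (i - m1) (by omega)).1 hAf)
              · simp only [if_neg h1, if_neg h2] at hAf
                exact hCV0 (hP1sub hAf)
      · calc (nbrF G Z (P2 \ {r})).card ≤ (k - 1) * (b - 1) := hbound2'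
          _ ≤ k * (b - 1) := Nat.mul_le_mul_right _ (by omega)
    · -- keep P1 pending, merge with P2
      push_neg at hfin1
      refine ⟨m1 + m2,
        (fun i => if i < m1 then Af1 i else Af2 (i - m1)),
        (fun i => if i < m1 then xf1 i else xf2 (i - m1)),
        P1 ∪ P2, ?_, ?_, ?_, ?_, Or.inr hrP2, ?_, ?_, ?_⟩
      · intro i hi
        by_cases h1 : i < m1
        · simp only [if_pos h1]
          obtain ⟨hs, hg⟩ := hgood1 i h1
          exact ⟨hs.trans hCV0, hg⟩
        · simp only [if_neg h1]
          obtain ⟨hs, hg⟩ := hgood2 (i - m1) (by omega)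
          exact ⟨hs.trans Set.diff_subset, hg⟩
      · intro i hi j hj hij
        have sub1 : ∀ l, l < m1 → Af1 l ⊆ C := fun l hl => (hgood1 l hl).1
        have sub2 : ∀ l, m1 ≤ l → l < m1 + m2 → Af2 (l - m1) ⊆ V0 \ C :=
          fun l hl hl' => (hgood2 (l - m1) (by omega)).1
        by_cases h1 : i < m1 <;> by_cases h2 : j < m1 <;>
          simp only [if_pos, if_neg, h1, h2]
        · exact hdisj1 i h1 j h2 hij
        · exact hdisjCV.mono (sub1 i h1) (sub2 j (by omega) hj)
        · exact (hdisjCV.mono (sub1 j h2) (sub2 i (by omega) hi)).symm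
        · exact hdisj2 (i - m1) (by omega) (j - m1) (by omega) (by omega)
      · intro i hi
        rw [Set.disjoint_union_right]
        by_cases h1 : i < m1
        · simp only [if_pos h1]
          exact ⟨hdisjP1 i h1, hdisjCV.mono ((hgood1 i h1).1) hP2sub⟩
        · simp only [if_neg h1]
          exact ⟨(hdisjCV.mono hP1sub ((hgood2 (i - m1) (by omega)).1)).symm,
            hdisjP2 (i - m1) (by omega)⟩
      · intro v
        constructor
        · intro hv
          by_cases hvC : v ∈ C
          · rcases (hunion1 v).mp hvC with hP1 | ⟨i, hi, hAf⟩
            · exact Or.inl (Or.inl hP1)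
            · exact Or.inr ⟨i, by omega, by simp only [if_pos hi]; exact hAf⟩
          · rcases (hunion2 v).mp ⟨hv, hvC⟩ with hP2' | ⟨i, hi, hAf⟩
            · exact Or.inl (Or.inr hP2')
            · exact Or.inr ⟨m1 + i, by omega, by
                simp only [if_neg (show ¬(m1 + i < m1) by omega), Nat.add_sub_cancel_left]
                exact hAf⟩
        · intro hv
          rcases hv with (hP1 | hP2') | ⟨i, hi, hAf⟩
          · exact hCV0 (hP1sub hP1)
          · exact Set.diff_subset (hP2sub hP2')
          · by_cases h1 : i < m1
            · simp only [if_pos h1] at hAf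
              exact hCV0 ((hgood1 i h1).1 hAf)
            · simp only [if_neg h1] at hAf
              exact Set.diff_subset ((hgood2 (i - m1) (by omega)).1 hAf)
      · exact Set.union_subset (hP1sub.trans hCV0) (hP2sub.trans Set.diff_subset)
      · exact allConn_union hP1conn hP2conn hwP1 hrP2 hadjrw'.symm
      · have hsplit : (P1 ∪ P2) \ {r} ⊆ P1 ∪ (P2 \ {r}) := by
          intro v hv
          rcases hv.1 with h | h
          · exact Or.inl h
          · exact Or.inr ⟨h, hv.2⟩
        calc (nbrF G Z ((P1 ∪ P2) \ {r})).card
            ≤ (nbrF G Z (P1 ∪ (P2 \ {r}))).card :=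
              Finset.card_le_card (nbrF_mono hsplit)
          _ ≤ (nbrF G Z P1).card + (nbrF G Z (P2 \ {r})).card := nbrF_union_card _ _
          _ ≤ (b - 1) + (k - 1) * (b - 1) := Nat.add_le_add (by omega) hbound2'
          _ = (1 + (k - 1)) * (b - 1) := by rw [add_mul, one_mul]
          _ = k * (b - 1) := by rw [show 1 + (k - 1) = k by omega]

lemma chunkL : ∀ (n : ℕ) (M : Finset α), M.card ≤ n → ∀ lo hi : ℕ, 1 ≤ lo → lo ≤ M.card →
    2 * lo - 1 ≤ hi →
    ∃ (k : ℕ) (cf : ℕ → Finset α), 1 ≤ k ∧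
      (∀ i < k, cf i ⊆ M ∧ lo ≤ (cf i).card ∧ (cf i).card ≤ hi) ∧
      (∀ i < k, ∀ j < k, i ≠ j → Disjoint (cf i) (cf j)) ∧
      (∀ z ∈ M, ∃ i < k, z ∈ cf i) := by
  intro n
  induction n using Nat.strong_induction_on with
  | _ n IH =>
  intro M hMn lo hi hlo1 hloM hhi
  by_cases hM : M.card ≤ hi
  · exact ⟨1, fun _ => M, le_rfl,
      fun i _ => ⟨Finset.Subset.refl M, hloM, hM⟩,
      fun i hi' j hj' hij => by omega,
      fun z hz => ⟨0, Nat.zero_lt_one, hz⟩⟩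
  · push_neg at hM
    obtain ⟨σ, hσsub, hσcard⟩ := Finset.exists_subset_card_eq hloM
    · have hrest : (M \ σ).card = M.card - lo := by
        rw [Finset.card_sdiff_of_subset hσsub, hσcard]
      have hMn' : (M \ σ).card < n := by
        have := Finset.card_le_card (Finset.sdiff_subset (s := M) (t := σ))
        omega
      obtain ⟨k, cf, hk1, hgood, hdisj, hcover⟩ :=
        IH (M \ σ).card hMn' (M \ σ) le_rfl lo hi hlo1 (by omega) hhi
      refine ⟨k + 1, (fun i => if i < k then cf i else σ), by omega, ?_, ?_, ?_⟩
      · intro i hik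
        by_cases h1 : i < k
        · simp only [if_pos h1]
          obtain ⟨hs, hc1, hc2⟩ := hgood i h1
          exact ⟨hs.trans (Finset.sdiff_subset), hc1, hc2⟩
        · simp only [if_neg h1]
          exact ⟨hσsub, by omega, by omega⟩
      · intro i hik j hjk hij
        by_cases h1 : i < k <;> by_cases h2 : j < k <;> simp only [if_pos, if_neg, h1, h2]
        · exact hdisj i h1 j h2 hij
        · exact Finset.disjoint_left.mpr
            (fun a ha hb => (Finset.mem_sdiff.mp ((hgood i h1).1 ha)).2 hb)
        · exact Finset.disjoint_left.mpr
            (fun a ha hb => (Finset.mem_sdiff.mp ((hgood j h2).1 hb)).2 ha)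
        · omega
      · intro z hz
        by_cases hzσ : z ∈ σ
        · exact ⟨k, by omega, by simp only [if_neg (lt_irrefl k)]; exact hzσ⟩
        · obtain ⟨i, hik, hzi⟩ := hcover z (Finset.mem_sdiff.mpr ⟨hz, hzσ⟩)
          exact ⟨i, by omega, by simp only [if_pos hik]; exact hzi⟩

lemma part_to_qs {G : SimpleGraph α} {Z : Finset α} {b : ℕ} (hb : 1 ≤ b)
    (A : Set α) (x : α)
    (hcard : b ≤ (nbrF G Z A).card)
    (hF : (nbrF G Z (A \ {x})).card + 3 ≤ 3 * b) :
    ∃ (k : ℕ) (Nf : ℕ → Finset α), 1 ≤ k ∧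
      (∀ i < k, nbrF G Z (A \ {x}) ⊆ Nf i ∧ Nf i ⊆ nbrF G Z A ∧
        b ≤ (Nf i).card ∧ (Nf i).card ≤ 3 * b) ∧
      (∀ z ∈ nbrF G Z A, ∃ i < k, z ∈ Nf i) ∧
      (∀ i < k, ∃ z ∈ Nf i, ∀ j < k, j ≠ i → z ∉ Nf j) := by
  set F := nbrF G Z (A \ {x}) with hFdef
  set D := nbrF G Z A with hDdef
  have hFD : F ⊆ D := nbrF_mono Set.diff_subset
  by_cases hD : D.card ≤ 3 * b
  · refine ⟨1, fun _ => D, le_rfl,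
      fun i _ => ⟨hFD, Finset.Subset.refl D, hcard, hD⟩,
      fun z hz => ⟨0, Nat.zero_lt_one, hz⟩, ?_⟩
    intro i hi1
    obtain ⟨z, hz⟩ := Finset.card_pos.mp (by omega : 0 < D.card)
    exact ⟨z, hz, fun j hj hij => by omega⟩
  · push_neg at hD
    set M := D \ F with hMdef
    have hMcard : M.card = D.card - F.card := Finset.card_sdiff_of_subset hFD
    set lo := max 1 (b - F.card) with hlodef
    set hi := 3 * b - F.card with hhidef
    have hFcard : F.card + 3 ≤ 3 * b := hF
    have hlo1 : 1 ≤ lo := le_max_left _ _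
    have hloM : lo ≤ M.card := by
      have h1 : F.card ≤ D.card := Finset.card_le_card hFD
      omega
    have hlo2 : b - F.card ≤ lo := le_max_right _ _
    have hlo3 : lo ≤ b := by
      rw [hlodef]; omega
    have hhi : 2 * lo - 1 ≤ hi := by omega
    obtain ⟨k, cf, hk1, hgood, hdisj, hcover⟩ := chunkL M.card M le_rfl lo hi hlo1 hloM hhi
    refine ⟨k, fun i => F ∪ cf i, hk1, ?_, ?_, ?_⟩
    · intro i hik
      obtain ⟨hsub, hc1, hc2⟩ := hgood i hik
      have hdisjF : Disjoint F (cf i) :=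
        Finset.disjoint_left.mpr (fun a ha hb' => (Finset.mem_sdiff.mp (hsub hb')).2 ha)
      have hcardu : (F ∪ cf i).card = F.card + (cf i).card :=
        Finset.card_union_of_disjoint hdisjF
      refine ⟨Finset.subset_union_left,
        Finset.union_subset hFD ((hsub).trans (Finset.sdiff_subset)), ?_, ?_⟩
      · show b ≤ (F ∪ cf i).card
        omega
      · show (F ∪ cf i).card ≤ 3 * b
        omega
    · intro z hz
      by_cases hzF : z ∈ F
      · exact ⟨0, by omega, Finset.mem_union_left _ hzF⟩
      · obtain ⟨i, hik, hzi⟩ := hcover z (Finset.mem_sdiff.mpr ⟨hz, hzF⟩)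
        exact ⟨i, hik, Finset.mem_union_right _ hzi⟩
    · intro i hik
      obtain ⟨hsub, hc1, hc2⟩ := hgood i hik
      obtain ⟨z, hz⟩ := Finset.card_pos.mp (by omega : 0 < (cf i).card)
      refine ⟨z, Finset.mem_union_right _ hz, ?_⟩
      intro j hjk hji hzj
      have hzM : z ∈ M := hsub hz
      rcases Finset.mem_union.mp hzj with h | h
      · exact (Finset.mem_sdiff.mp hzM).2 h
      · exact Finset.disjoint_left.mp (hdisj j hjk i hik hji) h hz

lemma assembleL {G : SimpleGraph α} {Z : Finset α} {b : ℕ} (hb : 1 ≤ b) :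
    ∀ (m' : ℕ) (Af : ℕ → Set α) (xf : ℕ → α),
    (∀ j < m', xf j ∈ Af j ∧ b ≤ (nbrF G Z (Af j)).card ∧
      (nbrF G Z (Af j \ {xf j})).card + 3 ≤ 3 * b) →
    (∀ i < m', ∀ j < m', i ≠ j → Disjoint (Af i) (Af j)) →
    ∃ (Mq : ℕ) (Nf : ℕ → Finset α) (Rf : ℕ → Set α),
      (∀ q < Mq, ∃ j < m', Rf q = Af j ∧ nbrF G Z (Af j \ {xf j}) ⊆ Nf q ∧
        Nf q ⊆ nbrF G Z (Af j) ∧ b ≤ (Nf q).card ∧ (Nf q).card ≤ 3 * b) ∧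
      (∀ j < m', ∀ z ∈ nbrF G Z (Af j), ∃ q < Mq, z ∈ Nf q) ∧
      (∀ q < Mq, ∃ z ∈ Nf q, ∀ q' < Mq, q' ≠ q → Rf q' = Rf q → z ∉ Nf q') := by
  intro m'
  induction m' with
  | zero =>
    intro Af xf _ _
    exact ⟨0, fun _ => ∅, fun _ => ∅, fun q hq => by omega, fun j hj => by omega,
      fun q hq => by omega⟩
  | succ m ih =>
    intro Af xf hgood hdisj
    obtain ⟨Mq, Nf, Rf, h1, h2, h3⟩ :=
      ih Af xf (fun j hj => hgood j (by omega))
        (fun i hi j hj hij => hdisj i (by omega) j (by omega) hij)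
    obtain ⟨hxm, hcm, hFm⟩ := hgood m (by omega)
    obtain ⟨k, Np, hk1, hNp, hNpcov, hNppriv⟩ := part_to_qs hb (Af m) (xf m) hcm hFm
    have hne : ∀ j' < m, Af j' ≠ Af m := by
      intro j' hj' heq
      exact Set.disjoint_left.mp (hdisj j' (by omega) m (by omega) (by omega))
        (hgood j' (by omega)).1 (heq ▸ (hgood j' (by omega)).1)
    refine ⟨Mq + k, (fun q => if q < Mq then Nf q else Np (q - Mq)),
      (fun q => if q < Mq then Rf q else Af m), ?_, ?_, ?_⟩
    · intro q hq
      by_cases hqM : q < Mq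
      · obtain ⟨j, hj, hRf, hrest⟩ := h1 q hqM
        exact ⟨j, by omega, by simp only [if_pos hqM]; exact hRf,
          by simp only [if_pos hqM]; exact hrest.1,
          by simp only [if_pos hqM]; exact hrest.2.1,
          by simp only [if_pos hqM]; exact hrest.2.2.1,
          by simp only [if_pos hqM]; exact hrest.2.2.2⟩
      · obtain ⟨hs1, hs2, hs3, hs4⟩ := hNp (q - Mq) (by omega)
        exact ⟨m, by omega, by simp only [if_neg hqM],
          by simp only [if_neg hqM]; exact hs1,
          by simp only [if_neg hqM]; exact hs2,
          by simp only [if_neg hqM]; exact hs3,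
          by simp only [if_neg hqM]; exact hs4⟩
    · intro j hj z hz
      by_cases hjm : j < m
      · obtain ⟨q, hq, hzq⟩ := h2 j hjm z hz
        exact ⟨q, by omega, by simp only [if_pos hq]; exact hzq⟩
      · have hjm' : j = m := by omega
        subst hjm'
        obtain ⟨i, hik, hzi⟩ := hNpcov z hz
        exact ⟨Mq + i, by omega, by
          simp only [if_neg (show ¬(Mq + i < Mq) by omega), Nat.add_sub_cancel_left]
          exact hzi⟩
    · intro q hq
      by_cases hqM : q < Mq
      · obtain ⟨z, hzq, hpriv⟩ := h3 q hqM
        refine ⟨z, by simp only [if_pos hqM]; exact hzq, ?_⟩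
        intro q' hq' hq'q hRR
        by_cases hq'M : q' < Mq
        · simp only [if_pos hq'M]
          simp only [if_pos hq'M, if_pos hqM] at hRR
          exact hpriv q' hq'M hq'q hRR
        · simp only [if_neg hq'M, if_pos hqM] at hRR
          obtain ⟨j, hj, hRf, _⟩ := h1 q hqM
          exact absurd (hRR.trans hRf).symm (hne j hj)
      · obtain ⟨z, hzq, hpriv⟩ := hNppriv (q - Mq) (by omega)
        refine ⟨z, by simp only [if_neg hqM]; exact hzq, ?_⟩
        intro q' hq' hq'q hRR
        by_cases hq'M : q' < Mq
        · simp only [if_pos hq'M, if_neg hqM] at hRR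
          obtain ⟨j, hj, hRf, _⟩ := h1 q' hq'M
          exact absurd (hRf.symm.trans hRR) (hne j hj)
        · simp only [if_neg hq'M]
          exact hpriv (q' - Mq) (by omega) (by omega)
end OT

lemma nb_pos (t : ℕ) : 1 ≤ nb t := by
  rw [nb, Nat.one_le_ceil_iff]
  have h2 : 0 < Real.logb 2 ((t : ℝ) + 2) := by
    apply Real.logb_pos (by norm_num)
    have : (0:ℝ) ≤ (t:ℝ) := Nat.cast_nonneg t
    linarith
  have h1 : (0:ℝ) < 16 * ((t:ℝ) + 2) := by positivity
  exact mul_pos h1 h2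

/-- For every connected subgraph `W` of `G` of maximum degree at most 3 and every
set `Z ⊆ V(G) \ V(W)` of at least `nb(t)` vertices, each having a neighbor in `V(W)`, there
exists a valid obstruction-template of `W` with respect to `Z` and `G`. -/
theorem stmt3 {α : Type} (t : ℕ) (G : SimpleGraph α) (W : G.Subgraph)
    (hWfin : W.verts.Finite) (hWconn : W.Connected)
    (hWdeg : ∀ v : α, (W.neighborSet v).ncard ≤ 3)
    (Z : Finset α) (hZW : ∀ z ∈ Z, z ∉ W.verts)
    (hZnbr : ∀ z ∈ Z, ∃ w ∈ W.verts, G.Adj z w)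
    (hZcard : nb t ≤ Z.card) :
    ∃ (Q : Finset ℕ) (N : ℕ → Finset α) (P : Set (Set α)) (R : ℕ → Set α),
      ValidOT G W Z t Q N P R := by
  classical
  set b := nb t with hbdef
  have hb : 1 ≤ b := nb_pos t
  obtain ⟨r, hr⟩ := hWconn.nonempty
  have hconn : AllConn W W.verts := connected_to_allConn hWconn
  have hNBfin : ∀ v : α, (W.neighborSet v).Finite :=
    fun v => hWfin.subset (fun u hu => W.edge_vert (W.adj_symm hu))
  have hZall : nbrF G Z W.verts = Z := by
    rw [nbrF]
    apply Finset.filter_true_of_mem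
    intro z hz
    exact hZnbr z hz
  obtain ⟨m, Af, xf, P, hgood, hdisj, hdisjP, hunion, hrP, hPsub, hPconn, hbound⟩ :=
    partL (G := G) (Z := Z) (b := b) hWfin hWdeg W.verts.ncard W.verts le_rfl subset_rfl hconn r hr
  have hb3 : (nbrF G Z (P \ {r})).card ≤ 3 * (b - 1) := by
    refine le_trans hbound (Nat.mul_le_mul_right _ ?_)
    calc (W.neighborSet r ∩ W.verts).ncard
        ≤ (W.neighborSet r).ncard := Set.ncard_le_ncard Set.inter_subset_left (hNBfin r)
      _ ≤ 3 := hWdeg r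
  have final : ∃ (m' : ℕ) (Af' : ℕ → Set α) (xf' : ℕ → α),
      (∀ j < m', Af' j ⊆ W.verts ∧ xf' j ∈ Af' j ∧ AllConn W (Af' j) ∧
        b ≤ (nbrF G Z (Af' j)).card ∧ (nbrF G Z (Af' j \ {xf' j})).card ≤ 3 * (b - 1)) ∧
      (∀ i < m', ∀ j < m', i ≠ j → Disjoint (Af' i) (Af' j)) ∧
      (∀ v, v ∈ W.verts ↔ ∃ j < m', v ∈ Af' j) := by
    by_cases hPb : b ≤ (nbrF G Z P).card
    · refine ⟨m + 1, (fun i => if i < m then Af i else P),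
        (fun i => if i < m then xf i else r), ?_, ?_, ?_⟩
      · intro j hj
        by_cases h1 : j < m
        · simp only [if_pos h1]
          obtain ⟨hs, hx, hc, hcard, hbd⟩ := hgood j h1
          exact ⟨hs, hx, hc, hcard, by omega⟩
        · simp only [if_neg h1]
          exact ⟨hPsub, hrP, hPconn, hPb, hb3⟩
      · intro i hi j hj hij
        by_cases h1 : i < m <;> by_cases h2 : j < m <;> simp only [if_pos, if_neg, h1, h2]
        · exact hdisj i h1 j h2 hij
        · exact hdisjP i h1
        · exact (hdisjP j h2).symm
        · omega
      · intro v
        constructor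
        · intro hv
          rcases (hunion v).mp hv with hP | ⟨i, hi, hAf⟩
          · exact ⟨m, by omega, by simp only [if_neg (lt_irrefl m)]; exact hP⟩
          · exact ⟨i, by omega, by simp only [if_pos hi]; exact hAf⟩
        · rintro ⟨j, hj, hAf⟩
          by_cases h1 : j < m
          · simp only [if_pos h1] at hAf
            exact (hunion v).mpr (Or.inr ⟨j, h1, hAf⟩)
          · simp only [if_neg h1] at hAf
            exact (hunion v).mpr (Or.inl hAf)
    · push_neg at hPb
      have hm1 : 1 ≤ m := by
        by_contra h
        have hPW : P = W.verts := by
          apply Set.eq_of_subset_of_subset hPsub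
          intro v hv
          rcases (hunion v).mp hv with hP | ⟨i, hi, _⟩
          · exact hP
          · omega
        rw [hPW, hZall] at hPb
        omega
      have hx0 : xf 0 ∈ Af 0 := (hgood 0 hm1).2.1
      have hx0W : xf 0 ∈ W.verts := (hgood 0 hm1).1 hx0
      have hx0P : xf 0 ∉ P := fun h => Set.disjoint_left.mp (hdisjP 0 hm1) hx0
        (absurd h (by exact fun h' => (Set.disjoint_left.mp (hdisjP 0 hm1) hx0 h')))
      obtain ⟨u, huP, w0, hw0P, hw0V, hadj⟩ :=
        connIn_exit (hconn r (hPsub hrP) (xf 0) hx0W) hrP hx0P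
      obtain ⟨j0, hj0, hw0A⟩ := ((hunion w0).mp hw0V).resolve_left hw0P
      have hsplitP : ∀ i < m, i ≠ j0 → Disjoint (Af i) (Af j0 ∪ P) := by
        intro i hi hij
        rw [Set.disjoint_union_right]
        exact ⟨hdisj i hi j0 hj0 hij, hdisjP i hi⟩
      refine ⟨m, (fun i => if i = j0 then Af j0 ∪ P else Af i), xf, ?_, ?_, ?_⟩
      · intro j hj
        by_cases h1 : j = j0
        · subst h1
          simp only [if_pos rfl]
          obtain ⟨hs, hx, hc, hcard, hbd⟩ := hgood j hj
          refine ⟨Set.union_subset hs hPsub, Or.inl hx,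
            allConn_union hc hPconn hw0A huP hadj.symm, ?_, ?_⟩
          · exact le_trans hcard (Finset.card_le_card (nbrF_mono Set.subset_union_left))
          · have hsplit : (Af j ∪ P) \ {xf j} ⊆ (Af j \ {xf j}) ∪ P := by
              intro v hv
              rcases hv.1 with h | h
              · exact Or.inl ⟨h, hv.2⟩
              · exact Or.inr h
            calc (nbrF G Z ((Af j ∪ P) \ {xf j})).card
                ≤ (nbrF G Z ((Af j \ {xf j}) ∪ P)).card :=
                  Finset.card_le_card (nbrF_mono hsplit)
              _ ≤ (nbrF G Z (Af j \ {xf j})).card + (nbrF G Z P).card := nbrF_union_card _ _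
              _ ≤ 3 * (b - 1) := by omega
        · simp only [if_neg h1]
          obtain ⟨hs, hx, hc, hcard, hbd⟩ := hgood j hj
          exact ⟨hs, hx, hc, hcard, by omega⟩
      · intro i hi j hj hij
        by_cases h1 : i = j0 <;> by_cases h2 : j = j0 <;> simp only [if_pos, if_neg, h1, h2]
        · omega
        · exact (hsplitP j hj (by omega)).symm
        · exact hsplitP i hi (by omega)
        · exact hdisj i hi j hj hij
      · intro v
        constructor
        · intro hv
          rcases (hunion v).mp hv with hP | ⟨i, hi, hAf⟩
          · exact ⟨j0, hj0, by simp only [if_pos rfl]; exact Or.inr hP⟩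
          · by_cases h1 : i = j0
            · subst h1
              exact ⟨i, hi, by simp only [if_pos rfl]; exact Or.inl hAf⟩
            · exact ⟨i, hi, by simp only [if_neg h1]; exact hAf⟩
        · rintro ⟨j, hj, hAf⟩
          by_cases h1 : j = j0
          · subst h1
            simp only [if_pos rfl] at hAf
            rcases hAf with h | h
            · exact (hunion v).mpr (Or.inr ⟨j, hj, h⟩)
            · exact (hunion v).mpr (Or.inl h)
          · simp only [if_neg h1] at hAf
            exact (hunion v).mpr (Or.inr ⟨j, hj, hAf⟩)
  obtain ⟨m', Af', xf', hgood', hdisj', hunion'⟩ := final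
  obtain ⟨Mq, Nf, Rf, hq1, hq2, hq3⟩ := assembleL hb m' Af' xf'
      (fun j hj => ⟨(hgood' j hj).2.1, (hgood' j hj).2.2.2.1, by
        have := (hgood' j hj).2.2.2.2; omega⟩)
      hdisj'
  refine ⟨Finset.range Mq, Nf, {A | ∃ j, j < m' ∧ A = Af' j}, Rf,
    ?_, ?_, ?_, ?_, ?_, ?_, ?_, ?_, ?_, ?_⟩
  · rintro A ⟨j, hj, rfl⟩
    exact ⟨(hgood' j hj).1,
      allConn_to_connected ⟨xf' j, (hgood' j hj).2.1⟩ (hgood' j hj).2.2.1⟩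
  · rintro A ⟨i, hi, rfl⟩ A' ⟨j, hj, rfl⟩ hne
    by_cases hij : i = j
    · subst hij; exact absurd rfl hne
    · exact hdisj' i hi j hj hij
  · apply Set.eq_of_subset_of_subset
    · intro v hv
      rw [Set.mem_iUnion₂] at hv
      obtain ⟨A, ⟨j, hj, rfl⟩, hvA⟩ := hv
      exact (hunion' v).mpr ⟨j, hj, hvA⟩
    · intro v hv
      obtain ⟨j, hj, hvA⟩ := (hunion' v).mp hv
      exact Set.mem_iUnion₂.mpr ⟨Af' j, ⟨j, hj, rfl⟩, hvA⟩
  · intro q hq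
    obtain ⟨j, hj, hRf, _⟩ := hq1 q (Finset.mem_range.mp hq)
    exact ⟨j, hj, hRf⟩
  · intro q hq
    obtain ⟨j, hj, hRf, hFsub, hNsub, _⟩ := hq1 q (Finset.mem_range.mp hq)
    exact Finset.coe_subset.mpr (hNsub.trans (nbrF_subset _))
  · intro q hq z hz
    obtain ⟨j, hj, hRf, hFsub, hNsub, _⟩ := hq1 q (Finset.mem_range.mp hq)
    obtain ⟨hzZ, a, ha, hadj⟩ := mem_nbrF.mp (hNsub hz)
    constructor
    · intro hzR
      exact hZW z hzZ ((hgood' j hj).1 (hRf ▸ hzR))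
    · exact ⟨a, hRf ▸ ha, hadj⟩
  · intro q hq
    obtain ⟨z, hz, hpriv⟩ := hq3 q (Finset.mem_range.mp hq)
    exact ⟨z, hz, fun q' hq' hne hRR =>
      hpriv q' (Finset.mem_range.mp hq') hne hRR⟩
  · intro z hz
    obtain ⟨wv, hwv, hadj⟩ := hZnbr z hz
    obtain ⟨j, hj, hwvA⟩ := (hunion' wv).mp hwv
    obtain ⟨q, hq, hzq⟩ := hq2 j hj z (mem_nbrF.mpr ⟨hz, wv, hwvA, hadj⟩)
    exact ⟨q, Finset.mem_range.mpr hq, hzq⟩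
  · intro q hq
    obtain ⟨j, hj, hRf, hFsub, hNsub, hc1, hc2⟩ := hq1 q (Finset.mem_range.mp hq)
    exact ⟨hc1, hc2⟩
  · intro q hq v hv v' hv' ⟨z, hz, hadjz, hzN⟩ ⟨z', hz', hadjz', hz'N⟩
    obtain ⟨j, hj, hRf, hFsub, _⟩ := hq1 q (Finset.mem_range.mp hq)
    rw [hRf] at hv hv'
    have key : ∀ w ∈ Af' j, ∀ y ∈ Z, G.Adj w y → y ∉ Nf q → w = xf' j := by
      intro w hw y hy hadjy hyN
      by_contra hne
      exact hyN (hFsub (mem_nbrF.mpr ⟨hy, w, ⟨hw, hne⟩, hadjy.symm⟩))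
    rw [key v hv z hz hadjz hzN, key v' hv' z' hz' hadjz' hz'N]
end

section
/- Let G be a graph, T a tree that is a subgraph of G, Z ⊆ V(G), and m ≥ 1 an integer. For an edge uv of T, let T_u(uv) denote the component of T − uv containing u, and for a subtree T' of T let w(T') = |Z ∩ N_G(V(T'))|. If w(T) ≥ 2m − 1, then there exists a vertex u of T such that w(T_u(uv)) ≥ m for every neighbor v of u in T. -/
/-- The vertex set of the component of `u` in `T` after deleting the edge `uv`. -/
def compSet {α : Type} {G : SimpleGraph α} (T : G.Subgraph) (u v : α) : Set α :=
  {w | ∃ (hw : w ∈ (T.deleteEdges {s(u, v)}).verts) (hu : u ∈ (T.deleteEdges {s(u, v)}).verts),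
        (T.deleteEdges {s(u, v)}).coe.Reachable ⟨w, hw⟩ ⟨u, hu⟩}


section AuxStmt4
variable {α : Type} {G : SimpleGraph α}

/-- Adjacency in `T` avoiding the edge `e`, as a relation on `α`. -/
def relAvoid (T : G.Subgraph) (e : Sym2 α) (a b : α) : Prop :=
  a ∈ T.verts ∧ b ∈ T.verts ∧ T.Adj a b ∧ s(a, b) ≠ e

lemma reach_of_rtg {T : G.Subgraph} {e : Sym2 α} {a b : α}
    (h : Relation.ReflTransGen (relAvoid T e) a b) (ha : a ∈ T.verts) :
    ∃ hb : b ∈ T.verts, (T.deleteEdges {e}).coe.Reachable ⟨a, ha⟩ ⟨b, hb⟩ := by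
  induction h with
  | refl => exact ⟨ha, SimpleGraph.Reachable.refl _⟩
  | tail h1 h2 ih =>
    obtain ⟨hb, hre⟩ := ih
    exact ⟨h2.2.1, hre.trans (SimpleGraph.Adj.reachable
      ⟨h2.2.2.1, by simpa using h2.2.2.2⟩)⟩

lemma rtg_of_walk {T : G.Subgraph} {e : Sym2 α} :
    ∀ {x y : (T.deleteEdges {e}).verts} (_ : (T.deleteEdges {e}).coe.Walk x y),
      Relation.ReflTransGen (relAvoid T e) x.1 y.1 := by
  intro x y p
  induction p with
  | nil => exact .refl
  | @cons a b c h q ih =>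
    simp only [SimpleGraph.Subgraph.coe_adj, SimpleGraph.Subgraph.deleteEdges_adj,
      Set.mem_singleton_iff] at h
    exact Relation.ReflTransGen.head ⟨a.2, b.2, h.1, h.2⟩ ih

lemma mem_compSet_iff {T : G.Subgraph} {u v w : α} :
    w ∈ compSet T u v ↔ w ∈ T.verts ∧ u ∈ T.verts ∧
      Relation.ReflTransGen (relAvoid T s(u, v)) w u := by
  constructor
  · rintro ⟨hw, hu, hr⟩
    exact ⟨hw, hu, rtg_of_walk hr.some⟩
  · rintro ⟨hw, hu, hr⟩
    obtain ⟨hb, hre⟩ := reach_of_rtg hr hw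
    exact ⟨hw, hb, hre⟩

lemma compSet_subset {T : G.Subgraph} {u v : α} : compSet T u v ⊆ T.verts :=
  fun _ h => (mem_compSet_iff.mp h).1

lemma self_mem_compSet {T : G.Subgraph} {u v : α} (h : T.Adj u v) : u ∈ compSet T u v :=
  mem_compSet_iff.mpr ⟨T.edge_vert h, T.edge_vert h, .refl⟩

lemma walk_of_rtg {T : G.Subgraph} {e : Sym2 α} {a b : α}
    (hb : b ∈ T.verts) (h : Relation.ReflTransGen (relAvoid T e) a b) :
    ∀ (ha : a ∈ T.verts),
      ∃ p : T.coe.Walk ⟨a, ha⟩ ⟨b, hb⟩, ∀ f ∈ p.edges, Sym2.map Subtype.val f ≠ e := by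
  induction h using Relation.ReflTransGen.head_induction_on with
  | refl => exact fun _ => ⟨.nil, by simp⟩
  | head hac hcb ih =>
    intro ha
    obtain ⟨p, hp⟩ := ih hac.2.1
    refine ⟨.cons (show T.coe.Adj ⟨_, ha⟩ ⟨_, hac.2.1⟩ from hac.2.2.1) p, ?_⟩
    intro f hf
    simp only [SimpleGraph.Walk.edges_cons, List.mem_cons] at hf
    rcases hf with rfl | hf
    · simpa using hac.2.2.2
    · exact hp f hf

lemma not_mem_compSet {T : G.Subgraph} {u v : α} (hTree : T.coe.IsTree) (h : T.Adj u v) :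
    v ∉ compSet T u v := by
  classical
  intro hv
  obtain ⟨hvV, huV, hr⟩ := mem_compSet_iff.mp hv
  obtain ⟨p, hp⟩ := walk_of_rtg huV hr hvV
  have hsingle : (SimpleGraph.Walk.cons
      (show T.coe.Adj ⟨v, hvV⟩ ⟨u, huV⟩ from h.symm) .nil).IsPath := by
    simp [SimpleGraph.Walk.cons_isPath_iff, Subtype.ext_iff, h.symm.ne]
  have huniq := hTree.existsUnique_path ⟨v, hvV⟩ ⟨u, huV⟩
  have heq := (huniq.unique (p.bypass_isPath) hsingle)
  have hmem : s((⟨v, hvV⟩ : T.verts), ⟨u, huV⟩) ∈ p.bypass.edges := by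
    rw [heq]; simp
  have := hp _ (p.edges_bypass_subset hmem)
  simp [Sym2.eq_swap] at this

lemma rtg_or_of_walk {T : G.Subgraph} {u v : α} :
    ∀ {x t : T.verts} (_ : T.coe.Walk x t), t.1 = u →
      Relation.ReflTransGen (relAvoid T s(u, v)) x.1 u ∨
      Relation.ReflTransGen (relAvoid T s(u, v)) x.1 v := by
  intro x t p
  induction p with
  | nil => rintro rfl; exact Or.inl .refl
  | @cons a b c hadj q ih =>
    intro ht
    by_cases he : s(a.1, b.1) = s(u, v)
    · rw [Sym2.eq_iff] at he
      rcases he with ⟨hh, _⟩ | ⟨hh, _⟩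
      · rw [hh]; exact Or.inl .refl
      · rw [hh]; exact Or.inr .refl
    · have hrel : relAvoid T s(u, v) a.1 b.1 := ⟨a.2, b.2, hadj, he⟩
      rcases ih ht with h | h
      · exact Or.inl (h.head hrel)
      · exact Or.inr (h.head hrel)

lemma mem_compSet_or {T : G.Subgraph} {u v : α} (hconn : T.coe.Connected)
    (huv : T.Adj u v) {z : α} (hz : z ∈ T.verts) :
    z ∈ compSet T u v ∨ z ∈ compSet T v u := by
  have hu : u ∈ T.verts := T.edge_vert huv
  have hv : v ∈ T.verts := T.edge_vert huv.symm
  obtain ⟨p⟩ := hconn ⟨z, hz⟩ ⟨u, hu⟩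
  rcases rtg_or_of_walk p rfl with h | h
  · exact Or.inl (mem_compSet_iff.mpr ⟨hz, hu, h⟩)
  · exact Or.inr (mem_compSet_iff.mpr ⟨hz, hv, by rwa [Sym2.eq_swap]⟩)

lemma compSet_mono {T : G.Subgraph} {u v x : α} (hTree : T.coe.IsTree)
    (huv : T.Adj u v) (hvx : T.Adj v x) (hxu : x ≠ u) :
    insert v (compSet T u v) ⊆ compSet T v x := by
  have hnv : ¬ Relation.ReflTransGen (relAvoid T s(u, v)) v u := by
    intro hr
    exact not_mem_compSet hTree huv
      (mem_compSet_iff.mpr ⟨T.edge_vert huv.symm, T.edge_vert huv, hr⟩)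
  have key : ∀ w, Relation.ReflTransGen (relAvoid T s(u, v)) w u →
      Relation.ReflTransGen (relAvoid T s(v, x)) w u := by
    intro w hr
    induction hr using Relation.ReflTransGen.head_induction_on with
    | refl => exact .refl
    | head hac hcb ih =>
      refine Relation.ReflTransGen.head ⟨hac.1, hac.2.1, hac.2.2.1, ?_⟩ ih
      intro he
      rw [Sym2.eq_iff] at he
      rcases he with ⟨rfl, rfl⟩ | ⟨rfl, rfl⟩
      · exact hnv (Relation.ReflTransGen.head hac hcb)
      · exact hnv hcb
  have last : relAvoid T s(v, x) u v :=
    ⟨T.edge_vert huv, T.edge_vert huv.symm, huv, by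
      intro he
      rw [Sym2.eq_iff] at he
      rcases he with ⟨h1, h2⟩ | ⟨h1, h2⟩
      · exact huv.ne h1
      · exact hxu h1.symm⟩
  intro w hw
  rcases hw with rfl | hw
  · exact self_mem_compSet hvx
  obtain ⟨hwV, huV, hr⟩ := mem_compSet_iff.mp hw
  exact mem_compSet_iff.mpr ⟨hwV, T.edge_vert hvx, (key w hr).tail last⟩

end AuxStmt4

/-- If `T` is a tree subgraph of `G`, `Z ⊆ V(G)` and `w(T') = |Z ∩ N_G(V(T'))|`
satisfies `w(T) ≥ 2m−1`, then some vertex `u` of `T` has `w(T_u(uv)) ≥ m` for every neighbor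
`v` of `u` in `T`. -/
theorem stmt4 {α : Type} (G : SimpleGraph α) (T : G.Subgraph)
    (hTfin : T.verts.Finite) (hTree : T.coe.IsTree)
    (Z : Set α) (m : ℕ) (hm : 1 ≤ m)
    (hw : 2 * m - 1 ≤ (Z ∩ {x | x ∉ T.verts ∧ ∃ s ∈ T.verts, G.Adj s x}).ncard) :
    ∃ u ∈ T.verts, ∀ v : α, T.Adj u v →
      m ≤ (Z ∩ {x | x ∉ compSet T u v ∧ ∃ s ∈ compSet T u v, G.Adj s x}).ncard := by
  classical
  have hconn := hTree.isConnected
  set WT : Set α := Z ∩ {x | x ∉ T.verts ∧ ∃ s ∈ T.verts, G.Adj s x} with hWT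
  have hWTfin : WT.Finite := by
    by_contra hinf
    rw [Set.Infinite.ncard hinf] at hw; omega
  have hsub : ∀ u v : α, (Z ∩ {x | x ∉ compSet T u v ∧ ∃ s ∈ compSet T u v, G.Adj s x})
      ⊆ WT ∪ T.verts := by
    rintro u v x ⟨hxZ, hxc, s, hs, hadj⟩
    by_cases hxT : x ∈ T.verts
    · exact Or.inr hxT
    · exact Or.inl ⟨hxZ, hxT, s, compSet_subset hs, hadj⟩
  have hfin : ∀ u v : α,
      (Z ∩ {x | x ∉ compSet T u v ∧ ∃ s ∈ compSet T u v, G.Adj s x}).Finite :=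
    fun u v => (hWTfin.union hTfin).subset (hsub u v)
  have hsum : ∀ u v : α, T.Adj u v →
      (Z ∩ {x | x ∉ compSet T u v ∧ ∃ s ∈ compSet T u v, G.Adj s x}).ncard < m →
      m ≤ (Z ∩ {x | x ∉ compSet T v u ∧ ∃ s ∈ compSet T v u, G.Adj s x}).ncard := by
    intro u v huv hlight
    have hcover : WT ⊆ (Z ∩ {x | x ∉ compSet T u v ∧ ∃ s ∈ compSet T u v, G.Adj s x}) ∪
        (Z ∩ {x | x ∉ compSet T v u ∧ ∃ s ∈ compSet T v u, G.Adj s x}) := by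
      rintro x ⟨hxZ, hxT, s, hsT, hadj⟩
      rcases mem_compSet_or hconn huv hsT with h | h
      · exact Or.inl ⟨hxZ, fun hc => hxT (compSet_subset hc), s, h, hadj⟩
      · exact Or.inr ⟨hxZ, fun hc => hxT (compSet_subset hc), s, h, hadj⟩
    have h1 := le_trans (Set.ncard_le_ncard hcover ((hfin u v).union (hfin v u)))
      (Set.ncard_union_le _ _)
    omega
  by_cases hP : ∃ p : α × α, T.Adj p.1 p.2 ∧
      (Z ∩ {x | x ∉ compSet T p.1 p.2 ∧ ∃ s ∈ compSet T p.1 p.2, G.Adj s x}).ncard < m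
  · obtain ⟨p0, hp0⟩ := hP
    set P : Set (α × α) := {p | T.Adj p.1 p.2 ∧
      (Z ∩ {x | x ∉ compSet T p.1 p.2 ∧ ∃ s ∈ compSet T p.1 p.2, G.Adj s x}).ncard < m} with hPdef
    have hPfin : P.Finite := (hTfin.prod hTfin).subset
      (fun p hp => ⟨T.edge_vert hp.1, T.edge_vert hp.1.symm⟩)
    obtain ⟨q, hqP, hmax⟩ := hPfin.exists_maximalFor
      (fun p => (compSet T p.1 p.2).ncard) P ⟨p0, hp0⟩
    refine ⟨q.2, T.edge_vert hqP.1.symm, ?_⟩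
    intro x hvx
    by_cases hxu : x = q.1
    · subst hxu
      exact hsum q.1 q.2 hqP.1 hqP.2
    · by_contra hlt
      push_neg at hlt
      have hmem : (q.2, x) ∈ P := ⟨hvx, hlt⟩
      have hss := compSet_mono hTree hqP.1 hvx hxu
      have hv_not : q.2 ∉ compSet T q.1 q.2 := not_mem_compSet hTree hqP.1
      have hcard : (compSet T q.1 q.2).ncard < (compSet T q.2 x).ncard := by
        have h1 : (insert q.2 (compSet T q.1 q.2)).ncard ≤ (compSet T q.2 x).ncard :=
          Set.ncard_le_ncard hss (hTfin.subset compSet_subset)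
        rwa [Set.ncard_insert_of_notMem hv_not (hTfin.subset compSet_subset)] at h1
      have heq := hmax (j := (q.2, x)) hmem (le_of_lt hcard)
      simp only at heq
      omega
  · push_neg at hP
    obtain ⟨⟨u0, hu0⟩⟩ := hconn.nonempty
    exact ⟨u0, hu0, fun v hv => hP (u0, v) hv⟩
end

section
/- Let F be a CNF formula, t ≥ 0 an integer, W a subgraph of inc(F), and Z ⊆ var(F) \ V(W). Let (B(W), P, R) be a valid obstruction-template of W with respect to Z and inc(F), with new-vertex side Q_W, and let q ∈ Q_W. Let B ⊆ var(F) be a set of variables such that B ∩ N_{B(W)}(q) = ∅, B ∩ V(W) = ∅, and every variable b ∈ B for which W contains a clause c with b ∈ lit(c) and a clause c' with ¬b ∈ lit(c') belongs to Z. Then there is a truth assignment τ ∈ 2^B such that inc(F[τ]) contains all vertices from the region R(q). -/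
/-- Given a valid obstruction-template of a subgraph `W` of `inc(F)` w.r.t. `Z`,
a vertex `q` of its new-vertex side, and a set `B ⊆ var(F)` avoiding `N_{B(W)}(q)` and `V(W)`
whose members killing `W` externally all lie in `Z`, some assignment `τ ∈ 2^B` keeps all
vertices of the region `R(q)` in `inc(F[τ])`. -/
theorem stmt5 {V : Type} [DecidableEq V] (t : ℕ) (F : CNF V) (W : F.inc.Subgraph)
    (hWconn : W.Connected)
    (Z : Finset (V ⊕ F.ι)) (hZvar : ∀ z ∈ Z, ∃ x : V, z = Sum.inl x ∧ x ∈ F.vars)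
    (hZW : ∀ z ∈ Z, z ∉ W.verts)
    {κ : Type} (Q : Finset κ) (N : κ → Finset (V ⊕ F.ι))
    (P : Set (Set (V ⊕ F.ι))) (R : κ → Set (V ⊕ F.ι))
    (hOT : ValidOT F.inc W Z t Q N P R)
    (q : κ) (hq : q ∈ Q)
    (B : Finset V) (hBvar : B ⊆ F.vars)
    (hBN : ∀ b ∈ B, Sum.inl b ∉ N q)
    (hBW : ∀ b ∈ B, Sum.inl b ∉ W.verts)
    (hBZ : ∀ b ∈ B,
      (∃ c c' : F.ι, Sum.inr c ∈ W.verts ∧ Sum.inr c' ∈ W.verts ∧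
        (b, true) ∈ F.lit c ∧ (b, false) ∈ F.lit c') → Sum.inl b ∈ Z) :
    ∃ τ : V → Bool, R q ⊆ F.surv B τ := by
  classical
  obtain ⟨h1, h2, h3, h4, h5, h6, h7, h8, h9, h10⟩ := hOT
  have hRP := h4 q hq
  have hRW : R q ⊆ W.verts := (h1 _ hRP).1
  have hnb : 0 < nb t := by
    have hlt : (1:ℝ) < (t:ℝ) + 2 := by
      have : (0:ℝ) ≤ (t:ℝ) := Nat.cast_nonneg t
      linarith
    have hlog : (0:ℝ) < Real.logb 2 ((t:ℝ) + 2) := Real.logb_pos (by norm_num) hlt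
    have hpos : (0:ℝ) < 16 * ((t:ℝ) + 2) * Real.logb 2 ((t:ℝ) + 2) :=
      mul_pos (by positivity) hlog
    exact Nat.ceil_pos.mpr hpos
  have hNne : (N q).Nonempty := Finset.card_pos.mp (lt_of_lt_of_le hnb (h9 q hq).1)
  -- every clause vertex in the region R q belongs to F.cls
  have hcls : ∀ c : F.ι, Sum.inr c ∈ R q → c ∈ F.cls := by
    intro c hc
    have hcW : Sum.inr c ∈ W.verts := hRW hc
    have hadj : ∃ u, F.inc.Adj (Sum.inr c) u := by
      by_cases hsing : ∀ w ∈ W.verts, w = Sum.inr c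
      · obtain ⟨z, hz⟩ := hNne
        obtain ⟨hzR, w, hwR, hadjw⟩ := h6 q hq z hz
        have hw : w = Sum.inr c := hsing w (hRW hwR)
        exact ⟨z, by rw [hw] at hadjw; exact hadjw.symm⟩
      · push_neg at hsing
        obtain ⟨w, hwW, hwne⟩ := hsing
        obtain ⟨p⟩ := hWconn ⟨Sum.inr c, hcW⟩ ⟨w, hwW⟩
        have hnil : ¬ p.Nil := SimpleGraph.Walk.not_nil_of_ne
          (by intro h; exact hwne (congrArg Subtype.val h).symm)
        have hadj1 := p.adj_snd hnil
        rw [SimpleGraph.Subgraph.coe_adj] at hadj1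
        exact ⟨_, W.adj_sub hadj1⟩
    obtain ⟨u, hu⟩ := hadj
    rcases u with x | j
    · rw [CNF.inc, SimpleGraph.fromRel_adj] at hu
      rcases hu.2 with h | h
      · cases h
      · exact h.1
    · rw [CNF.inc, SimpleGraph.fromRel_adj] at hu
      rcases hu.2 with h | h <;> cases h
  -- no variable of B occurs both positively and negatively in clauses of R q
  have hconf : ∀ b ∈ B, ∀ c c' : F.ι, Sum.inr c ∈ R q → Sum.inr c' ∈ R q →
      (b, true) ∈ F.lit c → (b, false) ∈ F.lit c' → False := by
    intro b hb c c' hc hc' ht hf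
    have hcF := hcls c hc
    have hc'F := hcls c' hc'
    have hzZ : Sum.inl b ∈ Z := hBZ b hb ⟨c, c', hRW hc, hRW hc', ht, hf⟩
    have hadj1 : F.inc.Adj (Sum.inr c) (Sum.inl b) := by
      rw [CNF.inc, SimpleGraph.fromRel_adj]
      exact ⟨by simp, Or.inr ⟨hcF, Or.inl ht⟩⟩
    have hadj2 : F.inc.Adj (Sum.inr c') (Sum.inl b) := by
      rw [CNF.inc, SimpleGraph.fromRel_adj]
      exact ⟨by simp, Or.inr ⟨hc'F, Or.inr hf⟩⟩
    have heq := h10 q hq _ hc _ hc'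
      ⟨Sum.inl b, hzZ, hadj1, hBN b hb⟩ ⟨Sum.inl b, hzZ, hadj2, hBN b hb⟩
    have hcc : c = c' := by injection heq
    subst hcc
    exact F.ok c hcF b ⟨ht, hf⟩
  refine ⟨fun b => if ∃ c, Sum.inr c ∈ R q ∧ (b, true) ∈ F.lit c then false else true, ?_⟩
  intro a ha
  rcases a with x | i
  · show x ∉ B
    intro hx
    exact hBW x hx (hRW ha)
  · show ∀ l ∈ F.lit i, l.1 ∈ B → _ ≠ l.2
    rintro ⟨b, s⟩ hl hlB
    cases s
    · simp only
      rw [if_neg]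
      · simp
      · rintro ⟨c, hc, ht⟩
        exact hconf b hlB c i hc ha ht hl
    · simp only
      rw [if_pos ⟨i, ha, hl⟩]
      simp
end

section
/- Let t ≥ 0 and k ≥ 1 be integers and F a CNF formula. Let O_s be a set of pairwise vertex-disjoint subgraphs of inc(F), each a subdivision of the (2t+2)-wall, and let Z ⊆ var(F) be disjoint from ⋃_{W∈O_s} V(W). For each W ∈ O_s let (B(W), P_W, R_W) be a valid obstruction-template of W with respect to Z and inc(F), where the sets Q_W of new vertices are pairwise disjoint; let B_m denote the union of the graphs B(W), a bipartite graph on Z ⊎ Q_m with Q_m = ⋃_{W∈O_s} Q_W. Let B be a strong W_{≤t}-backdoor set of F with |B| ≤ k such that B ∩ V(W) = ∅ for every W ∈ O_s and such that every variable b ∈ B for which some W ∈ O_s contains a clause c with b ∈ lit(c) and a clause c' with ¬b ∈ lit(c') belongs to Z. If L ⊆ Z is the neighborhood in B_m of at least t·2^k + 1 vertices of Q_m, then B ∩ L ≠ ∅. -/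
namespace StmtAux
open SimpleGraph

lemma nb_ge (t : ℕ) : t + 2 ≤ nb t := by
  have h0 : (0:ℝ) < (t:ℝ) + 2 := by positivity
  have h1 : (1:ℝ) ≤ Real.logb 2 ((t:ℝ) + 2) := by
    have h2 := Real.logb_self_eq_one (b := 2) (by norm_num)
    have h3 : Real.logb 2 2 ≤ Real.logb 2 ((t:ℝ) + 2) :=
      Real.logb_le_logb_of_le (by norm_num) (by norm_num) (by
        have : (0:ℝ) ≤ (t:ℝ) := Nat.cast_nonneg t
        linarith)
    linarith
  have h2 : ((t:ℝ) + 2) ≤ (16 : ℝ) * ((t : ℝ) + 2) * Real.logb 2 ((t : ℝ) + 2) := by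
    nlinarith
  have h4 := Nat.le_ceil ((16 : ℝ) * ((t : ℝ) + 2) * Real.logb 2 ((t : ℝ) + 2))
  have h5 : ((t + 2 : ℕ) : ℝ) ≤ ((nb t : ℕ) : ℝ) := by
    unfold nb
    push_cast
    push_cast at h4
    linarith
  exact_mod_cast h5

variable {ιT : Type} {T : SimpleGraph ιT}

/-- Connectivity within a set, via walks staying inside the set. -/
def ConnIn (T : SimpleGraph ιT) (C : Set ιT) : Prop :=
  ∀ a ∈ C, ∀ b ∈ C, ∃ w : T.Walk a b, ∀ x ∈ w.support, x ∈ C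

lemma path_sub (hA : T.IsAcyclic) {a b : ιT} (p q : T.Walk a b) (hp : p.IsPath) :
    p.support ⊆ q.support ∧ p.edges ⊆ q.edges := by
  classical
  have h := hA.path_unique ⟨p, hp⟩ ⟨q.bypass, q.bypass_isPath⟩
  have hpq : p = q.bypass := congrArg Subtype.val h
  rw [hpq]
  exact ⟨q.support_bypass_subset, q.edges_bypass_subset⟩

lemma connIn_inter (hA : T.IsAcyclic) {C D : Set ιT} (hC : ConnIn T C) (hD : ConnIn T D) :
    ConnIn T (C ∩ D) := by
  classical
  rintro a ⟨haC, haD⟩ b ⟨hbC, hbD⟩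
  obtain ⟨wC, hwC⟩ := hC a haC b hbC
  obtain ⟨wD, hwD⟩ := hD a haD b hbD
  refine ⟨wC.bypass, fun x hx => ⟨hwC x (wC.support_bypass_subset hx), hwD x ?_⟩⟩
  exact (path_sub hA wC.bypass wD wC.bypass_isPath).1 hx

lemma exists_cross {S : Set ιT} : ∀ {a b : ιT} (w : T.Walk a b), a ∈ S → b ∉ S →
    ∃ x y, T.Adj x y ∧ s(x, y) ∈ w.edges ∧ x ∈ S ∧ y ∉ S := by
  intro a b w
  induction w with
  | nil => intro ha hb; exact absurd ha hb
  | @cons u m v h q ih =>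
    intro ha hb
    by_cases hm : m ∈ S
    · obtain ⟨x, y, hxy, he, hx, hy⟩ := ih hm hb
      exact ⟨x, y, hxy, by simp [he], hx, hy⟩
    · exact ⟨u, m, h, by simp, ha, hm⟩

lemma helly3 (hA : T.IsAcyclic) {C1 C2 C3 : Set ιT}
    (h1 : ConnIn T C1) (h2 : ConnIn T C2) (h3 : ConnIn T C3)
    {a b c : ιT} (ha : a ∈ C1 ∩ C2) (hb : b ∈ C1 ∩ C3) (hc : c ∈ C2 ∩ C3) :
    ∃ m, m ∈ C1 ∧ m ∈ C2 ∧ m ∈ C3 := by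
  classical
  obtain ⟨w1, hw1⟩ := h1 a ha.1 b hb.1
  obtain ⟨w2, hw2⟩ := h2 a ha.2 c hc.1
  obtain ⟨w3, hw3⟩ := h3 b hb.2 c hc.2
  set P1 := w1.bypass with hP1def
  set P2 := w2.bypass with hP2def
  set P3 := w3.bypass with hP3def
  have hP1C : ∀ x ∈ P1.support, x ∈ C1 := fun x hx => hw1 x (w1.support_bypass_subset hx)
  have hP2C : ∀ x ∈ P2.support, x ∈ C2 := fun x hx => hw2 x (w2.support_bypass_subset hx)
  have hP3C : ∀ x ∈ P3.support, x ∈ C3 := fun x hx => hw3 x (w3.support_bypass_subset hx)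
  have hsub : ∀ x ∈ P3.support, x ∈ P1.support ∨ x ∈ P2.support := by
    intro x hx
    have hss : P3.support ⊆ (P1.reverse.append P2).support :=
      (path_sub hA P3 (P1.reverse.append P2) w3.bypass_isPath).1
    have hx2 := hss hx
    rw [SimpleGraph.Walk.mem_support_append_iff] at hx2
    rcases hx2 with h | h
    · left; rwa [SimpleGraph.Walk.support_reverse, List.mem_reverse] at h
    · right; exact h
  by_cases hm : ∃ m ∈ P3.support, m ∈ P1.support ∧ m ∈ P2.support
  · obtain ⟨m, hm3, hm1, hm2⟩ := hm
    exact ⟨m, hP1C m hm1, hP2C m hm2, hP3C m hm3⟩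
  push_neg at hm
  have hbP1 : b ∈ P1.support := SimpleGraph.Walk.end_mem_support P1
  have hcP2 : c ∈ P2.support := SimpleGraph.Walk.end_mem_support P2
  have hcP1 : c ∉ P1.support := fun h => hm c (SimpleGraph.Walk.end_mem_support P3) h hcP2
  obtain ⟨x, y, hxy, he, hxS, hyS⟩ :=
    exists_cross (S := {i | i ∈ P1.support}) P3 hbP1 hcP1
  have hx3 : x ∈ P3.support := P3.fst_mem_support_of_mem_edges he
  have hy3 : y ∈ P3.support := P3.snd_mem_support_of_mem_edges he
  have hyP2 : y ∈ P2.support := (hsub y hy3).resolve_left hyS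
  have hxP2 : x ∉ P2.support := fun h => hm x hx3 hxS h
  have hxy' : x ≠ y := fun h => hyS (h ▸ hxS)
  set w1' := P1.takeUntil x hxS with hw1'def
  set w2' := P2.takeUntil y hyP2 with hw2'def
  have hsingle : (SimpleGraph.Walk.cons hxy SimpleGraph.Walk.nil : T.Walk x y).IsPath := by
    rw [SimpleGraph.Walk.cons_isPath_iff]
    exact ⟨SimpleGraph.Walk.IsPath.nil, by simp [hxy']⟩
  have hedges := (path_sub hA (SimpleGraph.Walk.cons hxy SimpleGraph.Walk.nil)
    (w1'.reverse.append w2') hsingle).2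
  have hmem : s(x, y) ∈ (w1'.reverse.append w2').edges := hedges (by simp)
  rw [SimpleGraph.Walk.edges_append, List.mem_append] at hmem
  rcases hmem with h | h
  · rw [SimpleGraph.Walk.edges_reverse, List.mem_reverse] at h
    have : y ∈ w1'.support := w1'.snd_mem_support_of_mem_edges h
    exact absurd (P1.support_takeUntil_subset hxS this) hyS
  · have : x ∈ w2'.support := w2'.fst_mem_support_of_mem_edges h
    exact absurd (P2.support_takeUntil_subset hyP2 this) hxP2

lemma helly_list (hA : T.IsAcyclic) :
    ∀ (l : List (Set ιT)) (S : Set ιT), ConnIn T S → (∀ S' ∈ l, ConnIn T S') →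
    S.Nonempty → (∀ S' ∈ l, (S ∩ S').Nonempty) →
    (∀ S' ∈ l, ∀ S'' ∈ l, (S' ∩ S'').Nonempty) →
    ∃ m ∈ S, ∀ S' ∈ l, m ∈ S'
  | [], S, _, _, hne, _, _ => by
    obtain ⟨m, hm⟩ := hne; exact ⟨m, hm, by simp⟩
  | S' :: l, S, hS, hl, hne, hint, hpair => by
    have hS' : ConnIn T S' := hl S' (by simp)
    obtain ⟨m, hm, hml⟩ := helly_list hA l (S ∩ S') (connIn_inter hA hS hS')
      (fun S'' h => hl S'' (by simp [h]))
      (hint S' (by simp))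
      (fun S'' h => by
        obtain ⟨a, ha⟩ := hint S' (by simp)
        obtain ⟨b, hb⟩ := hint S'' (by simp [h])
        obtain ⟨c, hc⟩ := hpair S' (by simp) S'' (by simp [h])
        obtain ⟨m, hm1, hm2, hm3⟩ := helly3 hA hS hS' (hl S'' (by simp [h])) ha hb hc
        exact ⟨m, ⟨hm1, hm2⟩, hm3⟩)
      (fun a ha b hb => hpair a (by simp [ha]) b (by simp [hb]))
    refine ⟨m, hm.1, fun S'' h => ?_⟩
    rcases List.mem_cons.mp h with rfl | h
    · exact hm.2
    · exact hml S'' h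

/-- Connectivity conversion for `SimpleGraph.induce`. -/
lemma connIn_of_induce {s : Set ιT} (h : (T.induce s).Connected) : ConnIn T s := by
  intro a ha b hb
  obtain ⟨p⟩ := h.preconnected ⟨a, ha⟩ ⟨b, hb⟩
  refine ⟨((p.map ⟨Subtype.val, fun {u v} huv => huv⟩).copy rfl rfl), ?_⟩
  intro x hx
  rw [SimpleGraph.Walk.support_copy, SimpleGraph.Walk.support_map] at hx
  obtain ⟨y, _, rfl⟩ := List.mem_map.mp hx
  exact y.2

lemma no_small_decomp {α : Type} {G' : SimpleGraph α} {t : ℕ}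
    {T : SimpleGraph ιT} {bag : ιT → Finset α}
    (hT : T.IsTree)
    (hEdge : ∀ u v, G'.Adj u v → ∃ i, u ∈ bag i ∧ v ∈ bag i)
    (hConn : ∀ v, (T.induce {i | v ∈ bag i}).Connected)
    (hCard : ∀ i, (bag i).card ≤ t + 1)
    {κ : Type} (Qs : Finset κ) (hQs : t + 1 ≤ Qs.card)
    (Rg : κ → Set α)
    (hRconn : ∀ q ∈ Qs, ∀ a ∈ Rg q, ∀ b ∈ Rg q, ∃ w : G'.Walk a b, ∀ x ∈ w.support, x ∈ Rg q)
    (hRne : ∀ q ∈ Qs, (Rg q).Nonempty)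
    (hRdisj : ∀ q ∈ Qs, ∀ q' ∈ Qs, q ≠ q' → Disjoint (Rg q) (Rg q'))
    (L : Finset α) (hL : t + 2 ≤ L.card)
    (hLR : ∀ z ∈ L, ∀ q ∈ Qs, z ∉ Rg q)
    (hLadj : ∀ z ∈ L, ∀ q ∈ Qs, ∃ w ∈ Rg q, G'.Adj z w) : False := by
  classical
  have hA := hT.IsAcyclic
  set Tv : α → Set ιT := fun v => {i | v ∈ bag i} with hTvdef
  have hTvConn : ∀ v, ConnIn T (Tv v) := fun v => connIn_of_induce (hConn v)
  have hTvNe : ∀ v, (Tv v).Nonempty := by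
    intro v
    obtain ⟨⟨i, hi⟩⟩ := (hConn v).nonempty
    exact ⟨i, hi⟩
  -- the subtree hull of a region
  set Sg : κ → Set ιT := fun q => {i | ∃ v ∈ Rg q, v ∈ bag i} with hSgdef
  have hTvSub : ∀ v q, v ∈ Rg q → Tv v ⊆ Sg q := by
    intro v q hv i hi
    exact ⟨v, hv, hi⟩
  have hwalkLem : ∀ {v v' : α} (w : G'.Walk v v') (Rq : Set α),
      (∀ x ∈ w.support, x ∈ Rq) → ∀ a, v ∈ bag a → ∀ b, v' ∈ bag b →
      ∃ tw : T.Walk a b, ∀ x ∈ tw.support, ∃ u ∈ Rq, u ∈ bag x := by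
    intro v v' w
    induction w with
    | nil =>
      intro Rq hR a ha b hb
      obtain ⟨tw, htw⟩ := hTvConn _ a ha b hb
      exact ⟨tw, fun x hx => ⟨_, hR _ (by simp), htw x hx⟩⟩
    | @cons u m v' h q ih =>
      intro Rq hR a ha b hb
      obtain ⟨c, hc1, hc2⟩ := hEdge u m h
      obtain ⟨tw1, htw1⟩ := hTvConn u a ha c hc1
      obtain ⟨tw2, htw2⟩ := ih Rq (fun x hx => hR x (by simp [hx])) c hc2 b hb
      refine ⟨tw1.append tw2, ?_⟩
      intro x hx
      rcases (SimpleGraph.Walk.mem_support_append_iff _ _).mp hx with h1 | h2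
      · exact ⟨u, hR u (by simp), htw1 x h1⟩
      · exact htw2 x h2
  have hSgConn : ∀ q ∈ Qs, ConnIn T (Sg q) := by
    intro q hq a ha b hb
    obtain ⟨v, hv, hvb⟩ := ha
    obtain ⟨v', hv', hv'b⟩ := hb
    obtain ⟨w, hw⟩ := hRconn q hq v hv v' hv'
    exact hwalkLem w (Rg q) hw a hvb b hv'b
  have hSgNe : ∀ q ∈ Qs, (Sg q).Nonempty := by
    intro q hq
    obtain ⟨v, hv⟩ := hRne q hq
    obtain ⟨i, hi⟩ := hTvNe v
    exact ⟨i, v, hv, hi⟩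
  -- T_z meets Sg q for every z ∈ L, q ∈ Qs
  have hmeet : ∀ z ∈ L, ∀ q ∈ Qs, ∃ i, i ∈ Tv z ∧ i ∈ Sg q := by
    intro z hz q hq
    obtain ⟨w, hw, hadj⟩ := hLadj z hz q hq
    obtain ⟨i, hi1, hi2⟩ := hEdge z w hadj
    exact ⟨i, hi1, ⟨w, hw, hi2⟩⟩
  by_cases hpair : ∀ q ∈ Qs, ∀ q' ∈ Qs, (Sg q ∩ Sg q').Nonempty
  · -- Case 1: Helly
    have hzL : ∃ z, z ∈ L := Finset.card_pos.mp (by omega) |>.imp (fun z h => h)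
    obtain ⟨z, hz⟩ := hzL
    obtain ⟨m, hmz, hml⟩ := helly_list hA (Qs.toList.map Sg) (Tv z) (hTvConn z)
      (by
        intro S' hS'
        obtain ⟨q, hq, rfl⟩ := List.mem_map.mp hS'
        exact hSgConn q (Finset.mem_toList.mp hq))
      (hTvNe z)
      (by
        intro S' hS'
        obtain ⟨q, hq, rfl⟩ := List.mem_map.mp hS'
        obtain ⟨i, h1, h2⟩ := hmeet z hz q (Finset.mem_toList.mp hq)
        exact ⟨i, h1, h2⟩)
      (by
        intro S' hS' S'' hS''
        obtain ⟨q, hq, rfl⟩ := List.mem_map.mp hS'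
        obtain ⟨q', hq', rfl⟩ := List.mem_map.mp hS''
        exact hpair q (Finset.mem_toList.mp hq) q' (Finset.mem_toList.mp hq'))
    -- bag m contains z and one vertex from each region
    have hm' : ∀ q ∈ Qs, ∃ v ∈ Rg q, v ∈ bag m := by
      intro q hq
      exact hml (Sg q) (List.mem_map.mpr ⟨q, Finset.mem_toList.mpr hq, rfl⟩)
    choose f hf1 hf2 using hm'
    set f' : κ → α := fun q => if h : q ∈ Qs then f q h else z with hf'def
    have himage : insert z (Qs.image f') ⊆ bag m := by
      intro x hx
      rcases Finset.mem_insert.mp hx with rfl | hx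
      · exact hmz
      · obtain ⟨q, hq, rfl⟩ := Finset.mem_image.mp hx
        have e1 : f' q = f q hq := by simp only [hf'def]; exact dif_pos hq
        rw [e1]
        exact hf2 q hq
    have hinj : Set.InjOn f' Qs := by
      intro q hq q' hq' he
      by_contra hne
      have e1 : f' q = f q hq := by simp only [hf'def]; exact dif_pos hq
      have e2 : f' q' = f q' hq' := by simp only [hf'def]; exact dif_pos hq'
      have h1 : f' q ∈ Rg q := by rw [e1]; exact hf1 q hq
      have h2 : f' q' ∈ Rg q' := by rw [e2]; exact hf1 q' hq'
      rw [he] at h1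
      exact Set.disjoint_left.mp (hRdisj q hq q' hq' hne) h1 h2
    have hznotin : z ∉ Qs.image f' := by
      intro hzin
      obtain ⟨q, hq, hfq⟩ := Finset.mem_image.mp hzin
      have e1 : f' q = f q hq := by simp only [hf'def]; exact dif_pos hq
      have h1 : f' q ∈ Rg q := by rw [e1]; exact hf1 q hq
      rw [hfq] at h1
      exact hLR z hz q hq h1
    have hcard : t + 2 ≤ (bag m).card := by
      calc t + 2 ≤ Qs.card + 1 := by omega
        _ = (Qs.image f').card + 1 := by rw [Finset.card_image_of_injOn hinj]
        _ = (insert z (Qs.image f')).card := (Finset.card_insert_of_notMem hznotin).symm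
        _ ≤ (bag m).card := Finset.card_le_card himage
    have := hCard m
    omega
  · -- Case 2: two separated regions
    push_neg at hpair
    obtain ⟨q, hq, q', hq', hsep⟩ := hpair
    obtain ⟨a, ha⟩ := hSgNe q hq
    obtain ⟨b, hb⟩ := hSgNe q' hq'
    have hbq : b ∉ Sg q := by
      intro h
      have : b ∈ Sg q ∩ Sg q' := ⟨h, hb⟩
      rw [hsep] at this
      simpa using this
    obtain ⟨w0⟩ := hT.isConnected a b
    set P := w0.bypass with hPdef
    obtain ⟨x, y, hxy, he, hxS, hyS⟩ := exists_cross (S := Sg q) P ha hbq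
    -- every z ∈ L satisfies z ∈ bag x
    have hbagx : ∀ z ∈ L, z ∈ bag x := by
      intro z hz
      obtain ⟨c1, hc1z, hc1q⟩ := hmeet z hz q hq
      obtain ⟨c2, hc2z, hc2q'⟩ := hmeet z hz q' hq'
      obtain ⟨wz, hwz⟩ := hTvConn z c1 hc1z c2 hc2z
      obtain ⟨wq, hwq⟩ := hSgConn q hq a ha c1 hc1q
      obtain ⟨wq', hwq'⟩ := hSgConn q' hq' c2 hc2q' b hb
      set Wbig := wq.append (wz.append wq') with hWbigdef
      have hPpath : P.IsPath := w0.bypass_isPath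
      have hedge : s(x, y) ∈ Wbig.edges := (path_sub hA P Wbig hPpath).2 he
      rw [hWbigdef, SimpleGraph.Walk.edges_append, List.mem_append,
        SimpleGraph.Walk.edges_append, List.mem_append] at hedge
      rcases hedge with h1 | h2 | h3
      · exfalso
        have : y ∈ wq.support := wq.snd_mem_support_of_mem_edges h1
        exact hyS (hwq y this)
      · have : x ∈ wz.support := wz.fst_mem_support_of_mem_edges h2
        exact hwz x this
      · exfalso
        have : x ∈ wq'.support := wq'.fst_mem_support_of_mem_edges h3
        have : x ∈ Sg q ∩ Sg q' := ⟨hxS, hwq' x this⟩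
        rw [hsep] at this
        simpa using this
    have hcard : t + 2 ≤ (bag x).card := le_trans hL (Finset.card_le_card hbagx)
    have := hCard x
    omega

end StmtAux


namespace StmtAux

lemma inc_adj {V : Type} (F : CNF V) (x : V) (c : F.ι) :
    F.inc.Adj (Sum.inl x) (Sum.inr c) ↔
      c ∈ F.cls ∧ ((x, true) ∈ F.lit c ∨ (x, false) ∈ F.lit c) := by
  simp [CNF.inc, SimpleGraph.fromRel_adj]

lemma inc_adj_shape {V : Type} (F : CNF V) {a b : V ⊕ F.ι} (h : F.inc.Adj a b) :
    ∃ x c, ((a = Sum.inl x ∧ b = Sum.inr c) ∨ (a = Sum.inr c ∧ b = Sum.inl x)) ∧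
      c ∈ F.cls ∧ ((x, true) ∈ F.lit c ∨ (x, false) ∈ F.lit c) := by
  rcases a with x | c <;> rcases b with y | d <;>
    simp only [CNF.inc, SimpleGraph.fromRel_adj] at h
  · exact absurd h.2 (by simp)
  · exact ⟨x, d, Or.inl ⟨rfl, rfl⟩, by
      rcases h.2 with h' | h'
      · exact ⟨h'.1, h'.2⟩
      · exact absurd h' (by simp)⟩
  · refine ⟨y, c, Or.inr ⟨rfl, rfl⟩, ?_⟩
    rcases h.2 with h' | h'
    · exact absurd h' (by simp)
    · exact ⟨h'.1, h'.2⟩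
  · exact absurd h.2 (by simp)

lemma walk_neighbor_or {γ : Type} {W : SimpleGraph γ} :
    ∀ {s t : γ} (p : W.Walk s t) (w : γ), w ∈ p.support →
      (∃ w', W.Adj w w') ∨ (s = t ∧ w = s) := by
  intro s t p
  induction p with
  | nil =>
    intro w hw
    right
    exact ⟨rfl, by simpa using hw⟩
  | @cons u m v h q ih =>
    intro w hw
    rw [SimpleGraph.Walk.support_cons] at hw
    rcases List.mem_cons.mp hw with rfl | hw
    · exact Or.inl ⟨m, h⟩
    · rcases ih w hw with h' | ⟨rfl, rfl⟩
      · exact Or.inl h'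
      · exact Or.inl ⟨u, h.symm⟩

def killsP {V : Type} (F : CNF V) (Wv : Set (V ⊕ F.ι)) (b : V) (p : Bool) : Prop :=
  ∃ c : F.ι, Sum.inr c ∈ Wv ∧ (b, p) ∈ F.lit c

def specP {V : Type} (F : CNF V) (Rv : Set (V ⊕ F.ι)) (Nq Z : Finset (V ⊕ F.ι)) (b : V) :
    Prop :=
  ∃ c : F.ι, Sum.inr c ∈ Rv ∧ (b, true) ∈ F.lit c ∧
    ∃ z ∈ Z, F.inc.Adj (Sum.inr c) z ∧ z ∉ Nq

open Classical in
noncomputable def sigFun {V : Type} (F : CNF V) (Wv Rv : Set (V ⊕ F.ι))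
    (Nq Z : Finset (V ⊕ F.ι)) (b : V) : Bool :=
  if killsP F Wv b true ∧ ¬ killsP F Wv b false then false
  else if killsP F Wv b false ∧ ¬ killsP F Wv b true then true
  else if specP F Rv Nq Z b then false else true

lemma sigFun_ne {V : Type} (F : CNF V) (Wv Rv : Set (V ⊕ F.ι))
    (Nq Z : Finset (V ⊕ F.ι))
    (hRW : Rv ⊆ Wv)
    (hcls : ∀ c : F.ι, Sum.inr c ∈ Wv → c ∈ F.cls)
    (b : V) (p : Bool)
    (hZ : killsP F Wv b true → killsP F Wv b false → Sum.inl b ∈ Z ∧ Sum.inl b ∉ Nq)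
    (huniq : ∀ v ∈ Rv, ∀ v' ∈ Rv, (∃ z ∈ Z, F.inc.Adj v z ∧ z ∉ Nq) →
        (∃ z ∈ Z, F.inc.Adj v' z ∧ z ∉ Nq) → v = v')
    (c : F.ι) (hc : Sum.inr c ∈ Rv) (hl : (b, p) ∈ F.lit c) :
    sigFun F Wv Rv Nq Z b ≠ p := by
  classical
  have hcW : Sum.inr c ∈ Wv := hRW hc
  have hccls : c ∈ F.cls := hcls c hcW
  have hkp : killsP F Wv b p := ⟨c, hcW, hl⟩
  intro heq
  unfold sigFun at heq
  cases p with
  | true =>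
    by_cases hko : killsP F Wv b false
    · obtain ⟨hbZ, hbN⟩ := hZ hkp hko
      have hadj : F.inc.Adj (Sum.inr c) (Sum.inl b) :=
        ((inc_adj F b c).mpr ⟨hccls, Or.inl hl⟩).symm
      have hsp : specP F Rv Nq Z b := ⟨c, hc, hl, Sum.inl b, hbZ, hadj, hbN⟩
      rw [if_neg (by tauto), if_neg (by tauto), if_pos hsp] at heq
      exact absurd heq (by simp)
    · rw [if_pos ⟨hkp, hko⟩] at heq
      exact absurd heq (by simp)
  | false =>
    by_cases hko : killsP F Wv b true
    · obtain ⟨hbZ, hbN⟩ := hZ hko hkp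
      have hadj : F.inc.Adj (Sum.inr c) (Sum.inl b) :=
        ((inc_adj F b c).mpr ⟨hccls, Or.inr hl⟩).symm
      have hnsp : ¬ specP F Rv Nq Z b := by
        rintro ⟨c', hc', hl', hz'⟩
        have hceq : (Sum.inr c : V ⊕ F.ι) = Sum.inr c' :=
          huniq _ hc _ hc' ⟨Sum.inl b, hbZ, hadj, hbN⟩ hz'
        have hcc : c = c' := by injection hceq
        subst hcc
        exact F.ok c hccls b ⟨hl', hl⟩
      rw [if_neg (by tauto), if_neg (by tauto), if_neg hnsp] at heq
      exact absurd heq (by simp)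
    · rw [if_neg (by tauto), if_pos ⟨hkp, hko⟩] at heq
      exact absurd heq (by simp)

lemma reduce_inc_adj {V : Type} [DecidableEq V] (F : CNF V) (Bs : Finset V) (τ : V → Bool)
    {x : V} {c : F.ι} (hx : x ∉ Bs) (hc : c ∈ F.cls)
    (halive : ∀ l ∈ F.lit c, l.1 ∈ Bs → τ l.1 ≠ l.2)
    (hocc : (x, true) ∈ F.lit c ∨ (x, false) ∈ F.lit c) :
    (F.reduce Bs τ).inc.Adj (Sum.inl x) (Sum.inr c) := by
  refine (inc_adj (F.reduce Bs τ) x c).mpr ?_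
  dsimp only [CNF.reduce]
  refine ⟨Finset.mem_filter.mpr ⟨hc, halive⟩, ?_⟩
  rcases hocc with h | h
  · exact Or.inl (Finset.mem_filter.mpr ⟨h, hx⟩)
  · exact Or.inr (Finset.mem_filter.mpr ⟨h, hx⟩)

lemma walk_transfer {α : Type} {A : Set α} {H : SimpleGraph A} {G2 : SimpleGraph α}
    (h : ∀ u v : A, H.Adj u v → G2.Adj u.1 v.1) :
    ∀ {a b : A} (_ : H.Walk a b), ∃ w' : G2.Walk a.1 b.1, ∀ x ∈ w'.support, x ∈ A := by
  intro a b w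
  induction w with
  | nil =>
    refine ⟨SimpleGraph.Walk.nil, ?_⟩
    intro x hx
    rw [SimpleGraph.Walk.support_nil] at hx
    simp only [List.mem_singleton] at hx
    subst hx
    exact Subtype.coe_prop _
  | @cons u m b hadj q ih =>
    obtain ⟨w', hw'⟩ := ih
    refine ⟨SimpleGraph.Walk.cons (h _ _ hadj) w', ?_⟩
    intro x hx
    rw [SimpleGraph.Walk.support_cons] at hx
    rcases List.mem_cons.mp hx with rfl | hx
    · exact u.2
    · exact hw' x hx

end StmtAux

/-- soundness of Rule "Multiple Neighborhoods": with a family `O_s` of disjoint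
wall-obstructions in `inc(F)`, valid obstruction-templates for each of them over a common set
`Z`, and a strong `W_{≤t}`-backdoor set `B` of size `≤ k` killing no obstruction internally and
whose external killers lie in `Z`: if `L ⊆ Z` is the common neighborhood of at least
`t·2^k + 1` vertices of `Q_m`, then `B ∩ L ≠ ∅`. -/
theorem stmt7 {V : Type} [DecidableEq V] (t k : ℕ) (hk : 1 ≤ k) (F : CNF V)
    {ιO : Type} (Os : Finset ιO) (Wsub : ιO → F.inc.Subgraph)
    (hOdisj : ∀ i ∈ Os, ∀ j ∈ Os, i ≠ j → Disjoint (Wsub i).verts (Wsub j).verts)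
    (hOsub : ∀ i ∈ Os, IsSubdivisionOf (Wsub i).coe (Wall (2 * t + 2)))
    (Z : Finset (V ⊕ F.ι)) (hZvar : ∀ z ∈ Z, ∃ x : V, z = Sum.inl x ∧ x ∈ F.vars)
    (hZW : ∀ i ∈ Os, ∀ z ∈ Z, z ∉ (Wsub i).verts)
    {κ : Type} (Q : ιO → Finset κ)
    (hQdisj : ∀ i ∈ Os, ∀ j ∈ Os, i ≠ j → Disjoint (Q i) (Q j))
    (N : κ → Finset (V ⊕ F.ι)) (P : ιO → Set (Set (V ⊕ F.ι))) (R : ιO → κ → Set (V ⊕ F.ι))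
    (hOT : ∀ i ∈ Os, ValidOT F.inc (Wsub i) Z t (Q i) N (P i) (R i))
    (B : Finset V) (hB : F.strongBackdoor t B) (hBk : B.card ≤ k)
    (hBW : ∀ i ∈ Os, ∀ b ∈ B, Sum.inl b ∉ (Wsub i).verts)
    (hBZ : ∀ b ∈ B,
      (∃ i ∈ Os, ∃ c c' : F.ι, Sum.inr c ∈ (Wsub i).verts ∧ Sum.inr c' ∈ (Wsub i).verts ∧
        (b, true) ∈ F.lit c ∧ (b, false) ∈ F.lit c') → Sum.inl b ∈ Z)
    (L : Finset (V ⊕ F.ι)) (hLZ : L ⊆ Z)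
    (Qbig : Finset κ) (hQbig : ∀ q ∈ Qbig, ∃ i ∈ Os, q ∈ Q i)
    (hQbigN : ∀ q ∈ Qbig, N q = L)
    (hQbigCard : t * 2 ^ k + 1 ≤ Qbig.card) :
    ∃ b ∈ B, Sum.inl b ∈ L := by
  classical
  by_contra hcon
  push_neg at hcon
  have hQbigNe : Qbig.Nonempty :=
    Finset.card_pos.mp (lt_of_lt_of_le (Nat.succ_pos _) hQbigCard)
  obtain ⟨q₀, hq₀⟩ := hQbigNe
  obtain ⟨i₀, hi₀, hqi₀⟩ := hQbig q₀ hq₀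
  have hiqex : ∀ q : κ, ∃ i : ιO, q ∈ Qbig → i ∈ Os ∧ q ∈ Q i := by
    intro q
    by_cases h : q ∈ Qbig
    · obtain ⟨i, hi, hqi⟩ := hQbig q h
      exact ⟨i, fun _ => ⟨hi, hqi⟩⟩
    · exact ⟨i₀, fun hc => absurd hc h⟩
  choose iq hiq using hiqex
  -- every clause vertex of a wall is an actual clause
  have hWadj : ∀ i ∈ Os, ∀ v, ∀ _ : v ∈ (Wsub i).verts, ∃ u, F.inc.Adj v u := by
    intro i hi v hv
    obtain ⟨bm, p, hbinj, _, _, _, _, hcover, _⟩ := hOsub i hi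
    obtain ⟨u, w, h, hsup⟩ := hcover ⟨v, hv⟩
    rcases StmtAux.walk_neighbor_or (p u w h) ⟨v, hv⟩ hsup with ⟨w', hadj⟩ | ⟨heq, _⟩
    · exact ⟨w'.1, (Wsub i).adj_sub hadj⟩
    · exact absurd (hbinj heq) h.ne
  have hcls : ∀ i ∈ Os, ∀ c : F.ι, Sum.inr c ∈ (Wsub i).verts → c ∈ F.cls := by
    intro i hi c hc
    obtain ⟨u, hadj⟩ := hWadj i hi _ hc
    obtain ⟨x, c', hshape, hccls, _⟩ := StmtAux.inc_adj_shape F hadj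
    rcases hshape with ⟨h1, _⟩ | ⟨h1, _⟩
    · exact absurd h1 (by simp)
    · have hcc : c = c' := by injection h1
      rw [hcc]; exact hccls
  -- the signature function and pigeonhole
  set sig : κ → ({x // x ∈ B} → Bool) :=
    fun q b => StmtAux.sigFun F (Wsub (iq q)).verts (R (iq q) q) (N q) Z b.1 with hsigdef
  have hpig : ∃ s₀ : {x // x ∈ B} → Bool,
      t < (Qbig.filter (fun q => sig q = s₀)).card := by
    have hmaps : ∀ q ∈ Qbig, sig q ∈ (Finset.univ : Finset ({x // x ∈ B} → Bool)) :=
      fun q _ => Finset.mem_univ _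
    have hcardlt : (Finset.univ : Finset ({x // x ∈ B} → Bool)).card * t < Qbig.card := by
      have h1 : (Finset.univ : Finset ({x // x ∈ B} → Bool)).card = 2 ^ B.card := by
        rw [Finset.card_univ, Fintype.card_fun, Fintype.card_coe, Fintype.card_bool]
      have h2 : (2 : ℕ) ^ B.card ≤ 2 ^ k := Nat.pow_le_pow_right (by norm_num) hBk
      calc (Finset.univ : Finset ({x // x ∈ B} → Bool)).card * t
          ≤ 2 ^ k * t := by rw [h1]; exact Nat.mul_le_mul_right t h2
        _ < t * 2 ^ k + 1 := by rw [Nat.mul_comm]; omega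
        _ ≤ Qbig.card := hQbigCard
    obtain ⟨s₀, _, hs⟩ :=
      Finset.exists_lt_card_fiber_of_mul_lt_card_of_maps_to hmaps hcardlt
    exact ⟨s₀, hs⟩
  obtain ⟨s₀, hs₀⟩ := hpig
  set Qs := Qbig.filter (fun q => sig q = s₀) with hQsdef
  have hQsSub : Qs ⊆ Qbig := Finset.filter_subset _ _
  set τ : V → Bool := fun v => if h : v ∈ B then s₀ ⟨v, h⟩ else true with hτdef
  have hτeq : ∀ q ∈ Qs, ∀ b, ∀ hb : b ∈ B,
      τ b = StmtAux.sigFun F (Wsub (iq q)).verts (R (iq q) q) (N q) Z b := by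
    intro q hq b hb
    have h1 : sig q = s₀ := (Finset.mem_filter.mp hq).2
    have h2 : τ b = s₀ ⟨b, hb⟩ := by simp only [hτdef]; exact dif_pos hb
    rw [h2, ← h1]
  -- all clauses in selected regions survive the assignment τ
  have halive : ∀ q ∈ Qs, ∀ c : F.ι, Sum.inr c ∈ R (iq q) q →
      ∀ l ∈ F.lit c, l.1 ∈ B → τ l.1 ≠ l.2 := by
    intro q hq c hc l hl hlB
    obtain ⟨hiOs, hqQ⟩ := hiq q (hQsSub hq)
    obtain ⟨h1, h2, h3, h4, h5, h6, h7, h8, h9, h10⟩ := hOT (iq q) hiOs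
    have hRsub : R (iq q) q ⊆ (Wsub (iq q)).verts := (h1 _ (h4 q hqQ)).1
    obtain ⟨b, p⟩ := l
    show τ b ≠ p
    rw [hτeq q hq b hlB]
    refine StmtAux.sigFun_ne F _ _ _ _ hRsub (hcls _ hiOs) b p ?_ (h10 q hqQ) c hc hl
    intro hk1 hk2
    obtain ⟨c1, hc1, hl1⟩ := hk1
    obtain ⟨c2, hc2, hl2⟩ := hk2
    have hbZ : Sum.inl b ∈ Z := hBZ b hlB ⟨iq q, hiOs, c1, c2, hc1, hc2, hl1, hl2⟩
    refine ⟨hbZ, ?_⟩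
    rw [hQbigN q (hQsSub hq)]
    exact hcon b hlB
  -- region basic properties
  have hRprop : ∀ q ∈ Qs, R (iq q) q ⊆ (Wsub (iq q)).verts ∧
      ((Wsub (iq q)).induce (R (iq q) q)).Connected := by
    intro q hq
    obtain ⟨hiOs, hqQ⟩ := hiq q (hQsSub hq)
    obtain ⟨h1, _, _, h4, _⟩ := hOT (iq q) hiOs
    exact h1 _ (h4 q hqQ)
  set G2 := (F.reduce B τ).inc with hG2def
  have hRedge : ∀ q ∈ Qs, ∀ u v : V ⊕ F.ι, u ∈ R (iq q) q → v ∈ R (iq q) q →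
      F.inc.Adj u v → G2.Adj u v := by
    intro q hq u v hu hv hadj
    obtain ⟨hiOs, hqQ⟩ := hiq q (hQsSub hq)
    obtain ⟨x, c, hshape, hccls, hocc⟩ := StmtAux.inc_adj_shape F hadj
    have key : Sum.inr c ∈ R (iq q) q → x ∉ B → G2.Adj (Sum.inl x) (Sum.inr c) := by
      intro hcR hxB
      exact StmtAux.reduce_inc_adj F B τ hxB hccls (halive q hq c hcR) hocc
    have hxB : x ∉ B := by
      intro hxB
      rcases hshape with ⟨he1, he2⟩ | ⟨he1, he2⟩
      · exact hBW (iq q) hiOs x hxB ((hRprop q hq).1 (he1 ▸ hu))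
      · exact hBW (iq q) hiOs x hxB ((hRprop q hq).1 (he2 ▸ hv))
    rcases hshape with ⟨he1, he2⟩ | ⟨he1, he2⟩
    · rw [he1, he2]
      exact key (he2 ▸ hv) hxB
    · rw [he1, he2]
      exact (key (he1 ▸ hu) hxB).symm
  -- apply the backdoor property
  obtain ⟨ι', T, bag, hT, hEdge, hConn, hCard⟩ := hB.2 τ
  refine StmtAux.no_small_decomp hT hEdge hConn hCard Qs (by omega)
    (fun q => R (iq q) q) ?_ ?_ ?_ L ?_ ?_ ?_
  · -- region connectivity in G2
    intro q hq a ha b hb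
    have hconn := (hRprop q hq).2
    obtain ⟨w⟩ := hconn.coe.preconnected ⟨a, ha⟩ ⟨b, hb⟩
    exact StmtAux.walk_transfer
      (A := ((Wsub (iq q)).induce (R (iq q) q)).verts)
      (H := ((Wsub (iq q)).induce (R (iq q) q)).coe)
      (G2 := (F.reduce B τ).inc)
      (fun u v huv => hRedge q hq u.1 v.1 u.2 v.2
        (SimpleGraph.Subgraph.coe_adj_sub _ u v huv)) w
  · -- nonempty
    intro q hq
    exact ((hRprop q hq).2).nonempty
  · -- pairwise disjoint
    intro q hq q' hq' hne
    show Disjoint (R (iq q) q) (R (iq q') q')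
    obtain ⟨hiOs, hqQ⟩ := hiq q (hQsSub hq)
    obtain ⟨hiOs', hqQ'⟩ := hiq q' (hQsSub hq')
    by_cases hii : iq q = iq q'
    · obtain ⟨h1, h2, h3, h4, h5, h6, h7, h8, h9, h10⟩ := hOT (iq q) hiOs
      have hqQ'2 : q' ∈ Q (iq q) := by rw [hii]; exact hqQ'
      have hRne' : R (iq q) q ≠ R (iq q) q' := by
        intro hReq
        obtain ⟨z, hzN, hz⟩ := h7 q hqQ
        have hzL : z ∈ L := by rw [← hQbigN q (hQsSub hq)]; exact hzN
        have hzN' : z ∈ N q' := by rw [hQbigN q' (hQsSub hq')]; exact hzL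
        exact hz q' hqQ'2 (Ne.symm hne) hReq.symm hzN'
      rw [show iq q' = iq q from hii.symm]
      exact h2 _ (h4 q hqQ) _ (h4 q' hqQ'2) hRne'
    · exact (hOdisj (iq q) hiOs (iq q') hiOs' hii).mono (hRprop q hq).1 (hRprop q' hq').1
  · -- L is large
    obtain ⟨hiOs0, hqQ0⟩ := hiq q₀ hq₀
    obtain ⟨h1, h2, h3, h4, h5, h6, h7, h8, h9, h10⟩ := hOT (iq q₀) hiOs0
    have hnb := (h9 q₀ hqQ0).1
    rw [hQbigN q₀ hq₀] at hnb
    have := StmtAux.nb_ge t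
    exact le_trans this hnb
  · -- L avoids the regions
    intro z hz q hq hzR
    exact hZW (iq q) (hiq q (hQsSub hq)).1 z (hLZ hz) ((hRprop q hq).1 hzR)
  · -- every z ∈ L has a neighbor in each region, in G2
    intro z hz q hq
    obtain ⟨hiOs, hqQ⟩ := hiq q (hQsSub hq)
    obtain ⟨h1, h2, h3, h4, h5, h6, h7, h8, h9, h10⟩ := hOT (iq q) hiOs
    have hzN : z ∈ N q := by rw [hQbigN q (hQsSub hq)]; exact hz
    obtain ⟨hzR, w, hwR, hadj⟩ := h6 q hqQ z hzN
    obtain ⟨xz, rfl, hxvars⟩ := hZvar z (hLZ hz)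
    obtain ⟨x, c, hshape, hccls, hocc⟩ := StmtAux.inc_adj_shape F hadj
    rcases hshape with ⟨hz1, hw1⟩ | ⟨hz1, hw1⟩
    · subst hw1
      have hxB : x ∉ B := by
        intro hxB
        exact hcon x hxB (hz1 ▸ hz)
      refine ⟨Sum.inr c, hwR, ?_⟩
      rw [hz1]
      exact StmtAux.reduce_inc_adj F B τ hxB hccls (halive q hq c hwR) hocc
    · exact absurd hz1 (by simp)
end

section
/- Let t ≥ 0 be an integer, F a CNF formula, B a strong W_{≤t}-backdoor set of F, and W a subgraph of inc(F) that is a subdivision of the (2t+2)-wall with V(W) ∩ B = ∅. Then some variable x ∈ B kills W externally; in particular, W contains a clause c with x ∈ lit(c) and a clause c' with ¬x ∈ lit(c'). -/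
open SimpleGraph

variable {α β : Type}

/-- Connectivity of a set via walks staying inside it. -/
def Conn (G : SimpleGraph α) (S : Set α) : Prop :=
  S.Nonempty ∧ ∀ x ∈ S, ∀ y ∈ S, ∃ p : G.Walk x y, ∀ z ∈ p.support, z ∈ S

lemma conn_of_induce_connected {G : SimpleGraph α} {S : Set α}
    (h : (G.induce S).Connected) : Conn G S := by
  constructor
  · obtain ⟨⟨x, hx⟩⟩ := h.nonempty
    exact ⟨x, hx⟩
  · intro x hx y hy
    obtain ⟨q⟩ := h.preconnected ⟨x, hx⟩ ⟨y, hy⟩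
    let f : G.induce S →g G := ⟨Subtype.val, fun {a b} hab => hab⟩
    refine ⟨q.map f, ?_⟩
    intro z hz
    rw [SimpleGraph.Walk.support_map] at hz
    obtain ⟨⟨w, hw⟩, _, rfl⟩ := List.mem_map.mp hz
    exact hw

/-- A walk's support is `Conn`. -/
lemma conn_walk_support {G : SimpleGraph α} {x y : α} (p : G.Walk x y) :
    Conn G {z | z ∈ p.support} := by
  classical
  refine ⟨⟨x, p.start_mem_support⟩, ?_⟩
  intro a ha b hb
  refine ⟨(p.takeUntil a ha).reverse.append (p.takeUntil b hb), ?_⟩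
  intro z hz
  rw [SimpleGraph.Walk.mem_support_append_iff] at hz
  rcases hz with hz | hz
  · rw [SimpleGraph.Walk.support_reverse, List.mem_reverse] at hz
    exact p.support_takeUntil_subset ha hz
  · exact p.support_takeUntil_subset hb hz

lemma conn_union {G : SimpleGraph α} {A B : Set α} (hA : Conn G A) (hB : Conn G B)
    (hAB : (A ∩ B).Nonempty) : Conn G (A ∪ B) := by
  obtain ⟨m, hmA, hmB⟩ := hAB
  refine ⟨⟨m, Or.inl hmA⟩, ?_⟩
  have key : ∀ x ∈ A ∪ B, ∃ p : G.Walk x m, ∀ z ∈ p.support, z ∈ A ∪ B := by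
    intro x hx
    rcases hx with hx | hx
    · obtain ⟨p, hp⟩ := hA.2 x hx m hmA
      exact ⟨p, fun z hz => Or.inl (hp z hz)⟩
    · obtain ⟨p, hp⟩ := hB.2 x hx m hmB
      exact ⟨p, fun z hz => Or.inr (hp z hz)⟩
  intro x hx y hy
  obtain ⟨p, hp⟩ := key x hx
  obtain ⟨q, hq⟩ := key y hy
  refine ⟨p.append q.reverse, ?_⟩
  intro z hz
  rw [SimpleGraph.Walk.mem_support_append_iff] at hz
  rcases hz with hz | hz
  · exact hp z hz
  · rw [SimpleGraph.Walk.support_reverse, List.mem_reverse] at hz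
    exact hq z hz

lemma conn_descent {G : SimpleGraph α} {S : Set α} (x0 : α) (hx0 : x0 ∈ S) (μ : α → ℕ)
    (h : ∀ x ∈ S, x ≠ x0 → ∃ y ∈ S, G.Adj x y ∧ μ y < μ x) : Conn G S := by
  have key : ∀ n, ∀ x ∈ S, μ x ≤ n → ∃ p : G.Walk x x0, ∀ z ∈ p.support, z ∈ S := by
    intro n
    induction n using Nat.strong_induction_on with
    | _ n ih =>
      intro x hx hμ
      by_cases hxx : x = x0
      · subst hxx; exact ⟨SimpleGraph.Walk.nil, by simp [hx0]⟩
      · obtain ⟨y, hyS, hadj, hlt⟩ := h x hx hxx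
        have hyn : μ y < n := lt_of_lt_of_le hlt hμ
        obtain ⟨p, hp⟩ := ih (μ y) hyn y hyS le_rfl
        refine ⟨SimpleGraph.Walk.cons hadj p, ?_⟩
        intro z hz
        rw [SimpleGraph.Walk.support_cons, List.mem_cons] at hz
        rcases hz with rfl | hz
        · exact hx
        · exact hp z hz
  refine ⟨⟨x0, hx0⟩, ?_⟩
  intro x hx y hy
  obtain ⟨p, hp⟩ := key (μ x) x hx le_rfl
  obtain ⟨q, hq⟩ := key (μ y) y hy le_rfl
  refine ⟨p.append q.reverse, ?_⟩
  intro z hz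
  rw [SimpleGraph.Walk.mem_support_append_iff] at hz
  rcases hz with hz | hz
  · exact hp z hz
  · rw [SimpleGraph.Walk.support_reverse, List.mem_reverse] at hz
    exact hq z hz

lemma conn_biUnion {G : SimpleGraph α} {H : SimpleGraph β} {C : β → Set α} {X : Set β}
    (hX : Conn H X) (hC : ∀ u, Conn G (C u))
    (hadj : ∀ u v, H.Adj u v → ∃ a ∈ C u, ∃ b ∈ C v, a = b ∨ G.Adj a b) :
    Conn G (⋃ u ∈ X, C u) := by
  have hmem : ∀ {a : α} {u : β}, u ∈ X → a ∈ C u → a ∈ ⋃ u ∈ X, C u := by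
    intro a u hu ha
    exact Set.mem_biUnion hu ha
  have key : ∀ (u w : β) (q : H.Walk u w), (∀ z ∈ q.support, z ∈ X) →
      ∀ x ∈ C u, ∀ y ∈ C w, ∃ p : G.Walk x y, ∀ z ∈ p.support, z ∈ ⋃ u ∈ X, C u := by
    intro u w q
    induction q with
    | nil =>
      intro hsup x hx y hy
      obtain ⟨p, hp⟩ := (hC _).2 x hx y hy
      exact ⟨p, fun z hz => hmem (hsup _ (SimpleGraph.Walk.start_mem_support _)) (hp z hz)⟩
    | cons hadj' q' ih =>
      rename_i u₀ u₁ w₀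
      intro hsup x hx y hy
      have hu₀ : u₀ ∈ X := hsup _ (SimpleGraph.Walk.start_mem_support _)
      have hu₁ : u₁ ∈ X := by
        apply hsup
        rw [SimpleGraph.Walk.support_cons]
        exact List.mem_cons_of_mem _ (SimpleGraph.Walk.start_mem_support _)
      have hsup' : ∀ z ∈ q'.support, z ∈ X := by
        intro z hz
        apply hsup
        rw [SimpleGraph.Walk.support_cons]
        exact List.mem_cons_of_mem _ hz
      obtain ⟨a, ha, b, hb, hab⟩ := hadj u₀ u₁ hadj'
      obtain ⟨p₁, hp₁⟩ := (hC _).2 x hx a ha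
      obtain ⟨p₃, hp₃⟩ := ih hsup' b hb y hy
      rcases hab with rfl | hab
      · refine ⟨p₁.append p₃, ?_⟩
        intro z hz
        rw [SimpleGraph.Walk.mem_support_append_iff] at hz
        rcases hz with hz | hz
        · exact hmem hu₀ (hp₁ z hz)
        · exact hp₃ z hz
      · refine ⟨p₁.append (SimpleGraph.Walk.cons hab p₃), ?_⟩
        intro z hz
        rw [SimpleGraph.Walk.mem_support_append_iff] at hz
        rcases hz with hz | hz
        · exact hmem hu₀ (hp₁ z hz)
        · rw [SimpleGraph.Walk.support_cons, List.mem_cons] at hz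
          rcases hz with rfl | hz
          · exact hmem hu₀ ha
          · exact hp₃ z hz
  obtain ⟨u0, hu0⟩ := hX.1
  constructor
  · exact ⟨(hC u0).1.choose, hmem hu0 (hC u0).1.choose_spec⟩
  · intro x hx y hy
    obtain ⟨_, ⟨u, rfl⟩, _, ⟨hu, rfl⟩, hxu⟩ := hx
    obtain ⟨_, ⟨w, rfl⟩, _, ⟨hw, rfl⟩, hyw⟩ := hy
    obtain ⟨q, hq⟩ := hX.2 u hu w hw
    exact key u w q hq x hxu y hyw


section TreeHelly

variable {ι : Type}

/-- Path-closed subsets of a tree. -/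
def PC (T : SimpleGraph ι) (S : Set ι) : Prop :=
  ∀ i ∈ S, ∀ j ∈ S, ∀ p : T.Walk i j, p.IsPath → ∀ k ∈ p.support, k ∈ S

lemma pc_inter {T : SimpleGraph ι} {S1 S2 : Set ι} (h1 : PC T S1) (h2 : PC T S2) :
    PC T (S1 ∩ S2) := by
  intro i hi j hj p hp k hk
  exact ⟨h1 i hi.1 j hj.1 p hp k hk, h2 i hi.2 j hj.2 p hp k hk⟩

lemma pc_of_conn {T : SimpleGraph ι} (hT : T.IsTree) {S : Set ι} (hS : Conn T S) :
    PC T S := by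
  classical
  intro i hi j hj p hp k hk
  obtain ⟨q, hq⟩ := hS.2 i hi j hj
  have huniq : (⟨p, hp⟩ : T.Path i j) = q.toPath :=
    SimpleGraph.isAcyclic_iff_path_unique.mp (SimpleGraph.IsTree.IsAcyclic hT) _ _
  have hps : p = (q.toPath : T.Walk i j) := congrArg Subtype.val huniq
  rw [hps] at hk
  exact hq k (q.support_toPath_subset hk)

lemma helly3 {T : SimpleGraph ι} (hT : T.IsTree) {S1 S2 S3 : Set ι}
    (h1 : PC T S1) (h2 : PC T S2) (h3 : PC T S3)
    (h12 : (S1 ∩ S2).Nonempty) (h23 : (S2 ∩ S3).Nonempty) (h13 : (S1 ∩ S3).Nonempty) :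
    (S1 ∩ S2 ∩ S3).Nonempty := by
  classical
  obtain ⟨a, ha⟩ := h12
  obtain ⟨b, hb⟩ := h23
  obtain ⟨c, hc⟩ := h13
  have hpre := (SimpleGraph.IsTree.isConnected hT).preconnected
  obtain ⟨wab⟩ := hpre a b
  obtain ⟨wbc⟩ := hpre b c
  have supp1 : ∀ z ∈ (wab.toPath : T.Walk a b).support, z ∈ S2 :=
    h2 a ha.2 b hb.1 _ wab.toPath.2
  have supp2 : ∀ z ∈ (wbc.toPath : T.Walk b c).support, z ∈ S3 :=
    h3 b hb.2 c hc.2 _ wbc.toPath.2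
  set Q : T.Walk a c := ((wab.toPath : T.Walk a b).append (wbc.toPath : T.Walk b c)).bypass
    with hQ
  have hQpath : Q.IsPath := SimpleGraph.Walk.bypass_isPath _
  have hQ1 : ∀ z ∈ Q.support, z ∈ S1 := h1 a ha.1 c hc.1 Q hQpath
  have hQ23 : ∀ z ∈ Q.support, z ∈ S2 ∨ z ∈ S3 := by
    intro z hz
    have hz' := SimpleGraph.Walk.support_bypass_subset _ hz
    rw [SimpleGraph.Walk.mem_support_append_iff] at hz'
    rcases hz' with hz' | hz'
    · exact Or.inl (supp1 z hz')
    · exact Or.inr (supp2 z hz')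
  -- traversal claim
  have claim : ∀ (x y : ι) (q : T.Walk x y), x ∈ S2 → y ∈ S3 →
      (∀ z ∈ q.support, z ∈ S1 ∧ (z ∈ S2 ∨ z ∈ S3)) →
      (∃ z, z ∈ S1 ∧ z ∈ S2 ∧ z ∈ S3) ∨
      (∃ z₁ z₂, T.Adj z₁ z₂ ∧ z₁ ∈ S2 ∧ z₁ ∉ S3 ∧ z₂ ∈ S3 ∧ z₂ ∉ S2) := by
    intro x y q
    induction q with
    | nil =>
      rename_i x'
      intro hx hy hsup
      exact Or.inl ⟨x', (hsup x' (SimpleGraph.Walk.start_mem_support _)).1, hx, hy⟩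
    | cons hadj q' ih =>
      rename_i x₀ x₁ y₀
      intro hx hy hsup
      by_cases hx3 : x₀ ∈ S3
      · exact Or.inl ⟨x₀, (hsup x₀ (SimpleGraph.Walk.start_mem_support _)).1, hx, hx3⟩
      · have hx₁ : x₁ ∈ S1 ∧ (x₁ ∈ S2 ∨ x₁ ∈ S3) := by
          apply hsup
          rw [SimpleGraph.Walk.support_cons]
          exact List.mem_cons_of_mem _ (SimpleGraph.Walk.start_mem_support _)
        have hsup' : ∀ z ∈ q'.support, z ∈ S1 ∧ (z ∈ S2 ∨ z ∈ S3) := by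
          intro z hz
          apply hsup
          rw [SimpleGraph.Walk.support_cons]
          exact List.mem_cons_of_mem _ hz
        by_cases hx₁2 : x₁ ∈ S2
        · exact ih hx₁2 hy hsup'
        · have hx₁3 : x₁ ∈ S3 := hx₁.2.resolve_left hx₁2
          exact Or.inr ⟨x₀, x₁, hadj, hx, hx3, hx₁3, hx₁2⟩
  have hres := claim a c Q ha.2 hc.2 (fun z hz => ⟨hQ1 z hz, hQ23 z hz⟩)
  rcases hres with ⟨z, hz1, hz2, hz3⟩ | ⟨z₁, z₂, hadj, hz₁2, hz₁3, hz₂3, hz₂2⟩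
  · exact ⟨z, ⟨hz1, hz2⟩, hz3⟩
  · exfalso
    obtain ⟨wzb⟩ := hpre z₁ b
    have suppR : ∀ z ∈ (wzb.toPath : T.Walk z₁ b).support, z ∈ S2 :=
      h2 z₁ hz₁2 b hb.1 _ wzb.toPath.2
    by_cases hz₂R : z₂ ∈ (wzb.toPath : T.Walk z₁ b).support
    · exact hz₂2 (suppR z₂ hz₂R)
    · have hR' : (SimpleGraph.Walk.cons hadj.symm (wzb.toPath : T.Walk z₁ b)).IsPath :=
        SimpleGraph.Walk.IsPath.cons wzb.toPath.2 hz₂R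
      have suppR' := h3 z₂ hz₂3 b hb.2 _ hR'
      apply hz₁3
      apply suppR'
      rw [SimpleGraph.Walk.support_cons]
      exact List.mem_cons_of_mem _ (SimpleGraph.Walk.start_mem_support _)

lemma helly {T : SimpleGraph ι} (hT : T.IsTree) :
    ∀ (n : ℕ) (f : Fin n → Set ι), (∀ a, PC T (f a)) →
      (∀ a b, (f a ∩ f b).Nonempty) → 0 < n → ∃ i, ∀ a, i ∈ f a := by
  intro n
  induction n with
  | zero => intro f _ _ h; exact absurd h (lt_irrefl 0)
  | succ m ih =>
    intro f hPC hpair hpos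
    rcases Nat.eq_zero_or_pos m with rfl | hmpos
    · obtain ⟨i, hi⟩ := hpair 0 0
      refine ⟨i, fun a => ?_⟩
      have ha : a = 0 := by
        apply Fin.ext
        simpa using Nat.lt_one_iff.mp a.isLt
      rw [ha]; exact hi.1
    · set g : Fin m → Set ι := fun a => f a.castSucc ∩ f (Fin.last m) with hg
      have hgPC : ∀ a, PC T (g a) := fun a => pc_inter (hPC _) (hPC _)
      have hgpair : ∀ a b, (g a ∩ g b).Nonempty := by
        intro a b
        obtain ⟨i, hi⟩ := helly3 hT (hPC a.castSucc) (hPC b.castSucc) (hPC (Fin.last m))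
          (hpair _ _) (hpair _ _) (hpair _ _)
        exact ⟨i, ⟨hi.1.1, hi.2⟩, ⟨hi.1.2, hi.2⟩⟩
      obtain ⟨i, hi⟩ := ih g hgPC hgpair hmpos
      refine ⟨i, fun a => ?_⟩
      rcases Fin.eq_castSucc_or_eq_last a with ⟨a', rfl⟩ | rfl
      · exact (hi a').1
      · exact (hi ⟨0, hmpos⟩).2

end TreeHelly

/-- A bramble-like certificate forcing large bags. -/
def MyBramble {γ : Type} (G : SimpleGraph γ) (k : ℕ) : Prop :=
  ∃ (κ : Type) (_ : Fintype κ) (X : κ → Set γ),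
    (∀ q, Conn G (X q)) ∧
    (∀ q q', ∃ a ∈ X q, ∃ b ∈ X q', a = b ∨ G.Adj a b) ∧
    (∀ H : Finset γ, (∀ q, ∃ x ∈ H, x ∈ X q) → k ≤ H.card)

lemma bramble_bound {γ : Type} {G : SimpleGraph γ} {k t : ℕ}
    (hbr : MyBramble G k) (htw : twLE G t) : k ≤ t + 1 := by
  obtain ⟨κ, hfin, X0, hconnX0, htouch0, horder0⟩ := hbr
  obtain ⟨ι, T, bag, hT, hedge, hconn, hcard⟩ := htw
  classical
  rcases isEmpty_or_nonempty κ with hemp | hne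
  · have := horder0 ∅ (fun q => (hemp.false q).elim)
    exact le_trans this (by simp)
  set n : ℕ := @Fintype.card κ hfin with hn
  have hpos : 0 < n := @Fintype.card_pos κ hfin hne
  set e : Fin n → κ := fun q => (@Fintype.equivFin κ hfin).symm q with he
  set X : Fin n → Set γ := fun q => X0 (e q) with hX
  have hconnX : ∀ q, Conn G (X q) := fun q => hconnX0 _
  have htouch : ∀ q q', ∃ a ∈ X q, ∃ b ∈ X q', a = b ∨ G.Adj a b :=
    fun q q' => htouch0 _ _
  have horder : ∀ H : Finset γ, (∀ q, ∃ x ∈ H, x ∈ X q) → k ≤ H.card := by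
    intro H hH
    apply horder0 H
    intro q
    have := hH ((@Fintype.equivFin κ hfin) q)
    simpa [hX, he] using this
  set Sv : γ → Set ι := fun v => {i | v ∈ bag i} with hSv
  have hSvConn : ∀ v, Conn T (Sv v) := fun v => conn_of_induce_connected (hconn v)
  set TX : Fin n → Set ι := fun q => ⋃ v ∈ X q, Sv v with hTX
  have hTXconn : ∀ q, Conn T (TX q) := by
    intro q
    refine conn_biUnion (hconnX q) hSvConn ?_
    intro u v huv
    obtain ⟨i, hiu, hiv⟩ := hedge u v huv
    exact ⟨i, hiu, i, hiv, Or.inl rfl⟩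
  have hTXPC : ∀ q, PC T (TX q) := fun q => pc_of_conn hT (hTXconn q)
  have hpair : ∀ q q', (TX q ∩ TX q').Nonempty := by
    intro q q'
    obtain ⟨a, ha, b, hb, hab⟩ := htouch q q'
    rcases hab with rfl | hab
    · obtain ⟨i, hi⟩ := (hSvConn a).1
      exact ⟨i, Set.mem_biUnion ha hi, Set.mem_biUnion hb hi⟩
    · obtain ⟨i, hia, hib⟩ := hedge a b hab
      exact ⟨i, Set.mem_biUnion ha hia, Set.mem_biUnion hb hib⟩
  obtain ⟨i, hi⟩ := helly hT n TX hTXPC hpair hpos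
  refine le_trans (horder (bag i) ?_) (hcard i)
  intro q
  obtain ⟨v, hv, hvi⟩ := Set.mem_iUnion₂.mp (hi q)
  exact ⟨v, hvi, hv⟩



section WallSection

lemma wall_adj_vert {r i j : ℕ} (h1 : 1 ≤ i) (h2 : i + 1 ≤ r) (h3 : 1 ≤ j) (h4 : j ≤ r) :
    (wallGraph r).Adj (i, j) (i + 1, j) := by
  rw [wallGraph, SimpleGraph.fromRel_adj]
  refine ⟨?_, Or.inl ⟨h1, by omega, h3, h4, by omega, h2, h3, h4, Or.inl ⟨rfl, rfl⟩⟩⟩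
  intro h
  have := congrArg Prod.fst h
  simp only at this
  omega

lemma wall_adj_rung {r i j : ℕ} (h1 : 1 ≤ i) (h2 : i ≤ r) (h3 : 1 ≤ j) (h4 : j + 1 ≤ r)
    (he : Even (i + j)) : (wallGraph r).Adj (i, j) (i, j + 1) := by
  rw [wallGraph, SimpleGraph.fromRel_adj]
  refine ⟨?_, Or.inl ⟨h1, h2, h3, by omega, h1, h2, by omega, h4, Or.inr ⟨rfl, rfl, he⟩⟩⟩
  intro h
  have := congrArg Prod.snd h
  simp only at this
  omega

lemma wall_adj {r : ℕ} {u v : wallVerts r} (h : (wallGraph r).Adj u.val v.val) :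
    (Wall r).Adj u v := h

lemma mem_wallVerts {r i j : ℕ} (h1 : 1 ≤ i) (h2 : i ≤ r) (h3 : 1 ≤ j) (h4 : j ≤ r) :
    ((i, j) : ℕ × ℕ) ∈ wallVerts r := ⟨h1, h2, h3, h4⟩

/-- part of a column of the wall -/
def colSet (t b lo hi : ℕ) : Set (wallVerts (2*t+2)) :=
  {u | u.val.2 = b ∧ lo ≤ u.val.1 ∧ u.val.1 ≤ hi}

/-- part of a thick row of the wall -/
def rowSet (t a jmax : ℕ) : Set (wallVerts (2*t+2)) :=
  {u | (u.val.1 = 2*a - 1 ∨ u.val.1 = 2*a) ∧ u.val.2 ≤ jmax}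

lemma mem_colSet {t b lo hi i j : ℕ} (hv : (i, j) ∈ wallVerts (2*t+2))
    (h1 : j = b) (h2 : lo ≤ i) (h3 : i ≤ hi) :
    (⟨(i, j), hv⟩ : wallVerts (2*t+2)) ∈ colSet t b lo hi := ⟨h1, h2, h3⟩

lemma mem_rowSet {t a jmax i j : ℕ} (hv : (i, j) ∈ wallVerts (2*t+2))
    (h1 : i = 2*a - 1 ∨ i = 2*a) (h2 : j ≤ jmax) :
    (⟨(i, j), hv⟩ : wallVerts (2*t+2)) ∈ rowSet t a jmax := ⟨h1, h2⟩

lemma conn_col {t b lo hi : ℕ} (h1 : 1 ≤ lo) (h2 : lo ≤ hi) (h3 : hi ≤ 2*t+2)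
    (hb1 : 1 ≤ b) (hb2 : b ≤ 2*t+2) :
    Conn (Wall (2*t+2)) (colSet t b lo hi) := by
  have hx0 : ((lo, b) : ℕ × ℕ) ∈ wallVerts (2*t+2) :=
    mem_wallVerts h1 (le_trans h2 h3) hb1 hb2
  refine conn_descent (⟨(lo, b), hx0⟩ : wallVerts (2*t+2))
    (mem_colSet hx0 rfl le_rfl h2) (fun u => u.val.1) ?_
  rintro ⟨⟨i, j⟩, hv⟩ hmem hne
  have hj : j = b := hmem.1
  have hlo : lo ≤ i := hmem.2.1
  have hhi : i ≤ hi := hmem.2.2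
  have hvb : 1 ≤ i ∧ i ≤ 2*t+2 ∧ 1 ≤ j ∧ j ≤ 2*t+2 := hv
  have hilo : lo < i := by
    rcases lt_or_eq_of_le hlo with h | h
    · exact h
    · exfalso
      apply hne
      apply Subtype.ext
      show ((i : ℕ), j) = (lo, b)
      rw [← h, hj]
  have hy : ((i - 1, j) : ℕ × ℕ) ∈ wallVerts (2*t+2) :=
    mem_wallVerts (by omega) (by omega) hvb.2.2.1 hvb.2.2.2
  refine ⟨⟨(i - 1, j), hy⟩, mem_colSet hy hj (by omega) (by omega), ?_, ?_⟩
  · apply wall_adj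
    have hadj := wall_adj_vert (r := 2*t+2) (i := i - 1) (j := j)
      (by omega) (by omega) hvb.2.2.1 hvb.2.2.2
    have he : i - 1 + 1 = i := by omega
    rw [he] at hadj
    exact hadj.symm
  · show i - 1 < i
    omega

lemma conn_row {t a jmax : ℕ} (ha1 : 1 ≤ a) (ha2 : 2*a ≤ 2*t+2)
    (hj1 : 1 ≤ jmax) (hj2 : jmax ≤ 2*t+2) :
    Conn (Wall (2*t+2)) (rowSet t a jmax) := by
  have hx0 : ((2*a, 1) : ℕ × ℕ) ∈ wallVerts (2*t+2) :=
    mem_wallVerts (by omega) ha2 le_rfl (by omega)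
  refine conn_descent (⟨(2*a, 1), hx0⟩ : wallVerts (2*t+2))
    (mem_rowSet hx0 (Or.inr rfl) hj1)
    (fun u => 4 * u.val.2 + (if Even (u.val.1 + u.val.2) then 2 else 0)) ?_
  rintro ⟨⟨i, j⟩, hv⟩ hmem hne
  have hrow : i = 2*a - 1 ∨ i = 2*a := hmem.1
  have hjm : j ≤ jmax := hmem.2
  have hvb : 1 ≤ i ∧ i ≤ 2*t+2 ∧ 1 ≤ j ∧ j ≤ 2*t+2 := hv
  by_cases hpar : Even (i + j)
  · -- move vertically to the other row
    set i' : ℕ := if i = 2*a - 1 then 2*a else 2*a - 1 with hi'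
    have hio : (i = 2*a - 1 ∧ i' = 2*a) ∨ (i = 2*a ∧ i' = 2*a - 1) := by
      rcases hrow with h | h
      · exact Or.inl ⟨h, by rw [hi', if_pos h]⟩
      · refine Or.inr ⟨h, ?_⟩
        rw [hi', if_neg (by omega)]
    have hy : ((i', j) : ℕ × ℕ) ∈ wallVerts (2*t+2) :=
      mem_wallVerts (by omega) (by omega) hvb.2.2.1 hvb.2.2.2
    have hpar' : ¬ Even (i' + j) := by
      rw [Nat.even_iff] at hpar ⊢
      omega
    refine ⟨⟨(i', j), hy⟩, mem_rowSet hy (by omega) hjm, ?_, ?_⟩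
    · apply wall_adj
      show (wallGraph (2*t+2)).Adj (i, j) (i', j)
      have hadj := wall_adj_vert (r := 2*t+2) (i := 2*a-1) (j := j)
        (by omega) (by omega) hvb.2.2.1 hvb.2.2.2
      have he : 2*a - 1 + 1 = 2*a := by omega
      rw [he] at hadj
      rcases hio with ⟨e1, e2⟩ | ⟨e1, e2⟩
      · rw [e1, e2]; exact hadj
      · rw [e1, e2]; exact hadj.symm
    · show 4 * j + (if Even (i' + j) then 2 else 0) < 4 * j + (if Even (i + j) then 2 else 0)
      rw [if_pos hpar, if_neg hpar']
      omega
  · -- has a rung to the left, or is the base point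
    by_cases hj : j = 1
    · exfalso
      have hieq : i = 2*a := by
        rcases hrow with h | h
        · exfalso
          rw [Nat.even_iff] at hpar
          omega
        · exact h
      apply hne
      apply Subtype.ext
      show ((i : ℕ), j) = (2*a, 1)
      rw [hieq, hj]
    · have hj2' : 2 ≤ j := by omega
      have hy : ((i, j - 1) : ℕ × ℕ) ∈ wallVerts (2*t+2) :=
        mem_wallVerts hvb.1 hvb.2.1 (by omega) (by omega)
      have hpar' : Even (i + (j - 1)) := by
        rw [Nat.even_iff] at hpar ⊢
        omega
      refine ⟨⟨(i, j - 1), hy⟩, mem_rowSet hy hrow (by omega), ?_, ?_⟩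
      · apply wall_adj
        have hadj := wall_adj_rung (r := 2*t+2) (i := i) (j := j - 1)
          hvb.1 hvb.2.1 (by omega) (by omega) hpar'
        have he : j - 1 + 1 = j := by omega
        rw [he] at hadj
        exact hadj.symm
      · show 4 * (j - 1) + (if Even (i + (j - 1)) then 2 else 0) <
          4 * j + (if Even (i + j) then 2 else 0)
        rw [if_pos hpar', if_neg hpar]
        omega

/-- The bramble sets on the wall. -/
def wallX (t : ℕ) : (Fin t × Fin t) ⊕ Bool → Set (wallVerts (2*t+2))
  | Sum.inl (a, b) => rowSet t (a.val + 1) (2*t+1) ∪ colSet t (b.val + 1) 1 (2*t)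
  | Sum.inr false => rowSet t (t + 1) (2*t+1)
  | Sum.inr true => colSet t (2*t+2) 1 (2*t+2)

lemma wall_bramble (t : ℕ) : MyBramble (Wall (2*t+2)) (t+2) := by
  classical
  refine ⟨(Fin t × Fin t) ⊕ Bool, inferInstance, wallX t, ?_, ?_, ?_⟩
  · -- connectivity
    rintro (⟨a, b⟩ | bo)
    · have hat : a.val < t := a.isLt
      have hbt : b.val < t := b.isLt
      apply conn_union
      · exact conn_row (by omega) (by omega) (by omega) (by omega)
      · exact conn_col (by omega) (by omega) (by omega) (by omega) (by omega)
      · have hv : ((2*a.val+1, b.val+1) : ℕ × ℕ) ∈ wallVerts (2*t+2) :=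
          mem_wallVerts (by omega) (by omega) (by omega) (by omega)
        exact ⟨⟨(2*a.val+1, b.val+1), hv⟩,
          mem_rowSet hv (by omega) (by omega),
          mem_colSet hv rfl (by omega) (by omega)⟩
    · cases bo
      · exact conn_row (by omega) (by omega) (by omega) (by omega)
      · exact conn_col (by omega) (by omega) (by omega) (by omega) (by omega)
  · -- touching
    rintro (⟨a, b⟩ | bo) <;> rintro (⟨a', b'⟩ | bo')
    · -- cross vs cross
      have hat : a.val < t := a.isLt
      have hbt : b'.val < t := b'.isLt
      have hv : ((2*a.val+1, b'.val+1) : ℕ × ℕ) ∈ wallVerts (2*t+2) :=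
        mem_wallVerts (by omega) (by omega) (by omega) (by omega)
      exact ⟨⟨(2*a.val+1, b'.val+1), hv⟩, Or.inl (mem_rowSet hv (by omega) (by omega)),
        ⟨(2*a.val+1, b'.val+1), hv⟩, Or.inr (mem_colSet hv rfl (by omega) (by omega)),
        Or.inl rfl⟩
    · cases bo'
      · -- cross vs E1 : (2t, b+1) ~ (2t+1, b+1)
        have hbt : b.val < t := b.isLt
        have hv1 : ((2*t, b.val+1) : ℕ × ℕ) ∈ wallVerts (2*t+2) :=
          mem_wallVerts (by omega) (by omega) (by omega) (by omega)
        have hv2 : ((2*t+1, b.val+1) : ℕ × ℕ) ∈ wallVerts (2*t+2) :=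
          mem_wallVerts (by omega) (by omega) (by omega) (by omega)
        refine ⟨⟨(2*t, b.val+1), hv1⟩, Or.inr (mem_colSet hv1 rfl (by omega) (by omega)),
          ⟨(2*t+1, b.val+1), hv2⟩, mem_rowSet hv2 (by omega) (by omega), Or.inr ?_⟩
        exact wall_adj (wall_adj_vert (by omega) (by omega) (by omega) (by omega))
      · -- cross vs E2 : (2a+1, 2t+1) ~ (2a+1, 2t+2)
        have hat : a.val < t := a.isLt
        have hv1 : ((2*a.val+1, 2*t+1) : ℕ × ℕ) ∈ wallVerts (2*t+2) :=
          mem_wallVerts (by omega) (by omega) (by omega) (by omega)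
        have hv2 : ((2*a.val+1, 2*t+2) : ℕ × ℕ) ∈ wallVerts (2*t+2) :=
          mem_wallVerts (by omega) (by omega) (by omega) (by omega)
        refine ⟨⟨(2*a.val+1, 2*t+1), hv1⟩, Or.inl (mem_rowSet hv1 (by omega) (by omega)),
          ⟨(2*a.val+1, 2*t+2), hv2⟩, mem_colSet hv2 rfl (by omega) (by omega), Or.inr ?_⟩
        exact wall_adj (wall_adj_rung (by omega) (by omega) (by omega) (by omega)
          (Nat.even_iff.mpr (by omega)))
    · cases bo
      · -- E1 vs cross
        have hbt : b'.val < t := b'.isLt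
        have hv1 : ((2*t+1, b'.val+1) : ℕ × ℕ) ∈ wallVerts (2*t+2) :=
          mem_wallVerts (by omega) (by omega) (by omega) (by omega)
        have hv2 : ((2*t, b'.val+1) : ℕ × ℕ) ∈ wallVerts (2*t+2) :=
          mem_wallVerts (by omega) (by omega) (by omega) (by omega)
        refine ⟨⟨(2*t+1, b'.val+1), hv1⟩, mem_rowSet hv1 (by omega) (by omega),
          ⟨(2*t, b'.val+1), hv2⟩, Or.inr (mem_colSet hv2 rfl (by omega) (by omega)),
          Or.inr ?_⟩
        exact wall_adj ((wall_adj_vert (by omega) (by omega) (by omega) (by omega)).symm)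
      · -- E2 vs cross
        have hat : a'.val < t := a'.isLt
        have hv1 : ((2*a'.val+1, 2*t+2) : ℕ × ℕ) ∈ wallVerts (2*t+2) :=
          mem_wallVerts (by omega) (by omega) (by omega) (by omega)
        have hv2 : ((2*a'.val+1, 2*t+1) : ℕ × ℕ) ∈ wallVerts (2*t+2) :=
          mem_wallVerts (by omega) (by omega) (by omega) (by omega)
        refine ⟨⟨(2*a'.val+1, 2*t+2), hv1⟩, mem_colSet hv1 rfl (by omega) (by omega),
          ⟨(2*a'.val+1, 2*t+1), hv2⟩, Or.inl (mem_rowSet hv2 (by omega) (by omega)),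
          Or.inr ?_⟩
        exact wall_adj ((wall_adj_rung (by omega) (by omega) (by omega) (by omega)
          (Nat.even_iff.mpr (by omega))).symm)
    · cases bo <;> cases bo'
      · -- E1 vs E1
        have hv : ((2*t+1, 1) : ℕ × ℕ) ∈ wallVerts (2*t+2) :=
          mem_wallVerts (by omega) (by omega) (by omega) (by omega)
        exact ⟨⟨(2*t+1, 1), hv⟩, mem_rowSet hv (by omega) (by omega),
          ⟨(2*t+1, 1), hv⟩, mem_rowSet hv (by omega) (by omega), Or.inl rfl⟩
      · -- E1 vs E2
        have hv1 : ((2*t+1, 2*t+1) : ℕ × ℕ) ∈ wallVerts (2*t+2) :=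
          mem_wallVerts (by omega) (by omega) (by omega) (by omega)
        have hv2 : ((2*t+1, 2*t+2) : ℕ × ℕ) ∈ wallVerts (2*t+2) :=
          mem_wallVerts (by omega) (by omega) (by omega) (by omega)
        refine ⟨⟨(2*t+1, 2*t+1), hv1⟩, mem_rowSet hv1 (by omega) (by omega),
          ⟨(2*t+1, 2*t+2), hv2⟩, mem_colSet hv2 rfl (by omega) (by omega), Or.inr ?_⟩
        exact wall_adj (wall_adj_rung (by omega) (by omega) (by omega) (by omega)
          (Nat.even_iff.mpr (by omega)))
      · -- E2 vs E1
        have hv1 : ((2*t+1, 2*t+2) : ℕ × ℕ) ∈ wallVerts (2*t+2) :=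
          mem_wallVerts (by omega) (by omega) (by omega) (by omega)
        have hv2 : ((2*t+1, 2*t+1) : ℕ × ℕ) ∈ wallVerts (2*t+2) :=
          mem_wallVerts (by omega) (by omega) (by omega) (by omega)
        refine ⟨⟨(2*t+1, 2*t+2), hv1⟩, mem_colSet hv1 rfl (by omega) (by omega),
          ⟨(2*t+1, 2*t+1), hv2⟩, mem_rowSet hv2 (by omega) (by omega), Or.inr ?_⟩
        exact wall_adj ((wall_adj_rung (by omega) (by omega) (by omega) (by omega)
          (Nat.even_iff.mpr (by omega))).symm)
      · -- E2 vs E2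
        have hv : ((1, 2*t+2) : ℕ × ℕ) ∈ wallVerts (2*t+2) :=
          mem_wallVerts (by omega) (by omega) (by omega) (by omega)
        exact ⟨⟨(1, 2*t+2), hv⟩, mem_colSet hv rfl (by omega) (by omega),
          ⟨(1, 2*t+2), hv⟩, mem_colSet hv rfl (by omega) (by omega), Or.inl rfl⟩
  · -- order
    intro H hH
    by_contra hlt
    push_neg at hlt
    have hcard : H.card ≤ t + 1 := by omega
    obtain ⟨h1, hh1H, hh1⟩ := hH (Sum.inr false)
    obtain ⟨h2, hh2H, hh2⟩ := hH (Sum.inr true)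
    have hh1r : (h1.val.1 = 2*(t+1) - 1 ∨ h1.val.1 = 2*(t+1)) ∧ h1.val.2 ≤ 2*t+1 := hh1
    have hh2c : h2.val.2 = 2*t+2 ∧ 1 ≤ h2.val.1 ∧ h2.val.1 ≤ 2*t+2 := hh2
    have hne12 : h1 ≠ h2 := by
      intro h
      rw [h] at hh1r
      omega
    have h2card : 2 ≤ H.card := by
      have hsub : ({h1, h2} : Finset (wallVerts (2*t+2))) ⊆ H := by
        intro x hx
        rcases Finset.mem_insert.mp hx with rfl | hx
        · exact hh1H
        · rw [Finset.mem_singleton.mp hx]; exact hh2H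
      calc 2 = ({h1, h2} : Finset (wallVerts (2*t+2))).card := (Finset.card_pair hne12).symm
        _ ≤ H.card := Finset.card_le_card hsub
    have ht1 : 1 ≤ t := by omega
    set H' : Finset (wallVerts (2*t+2)) := (H.erase h1).erase h2 with hH'
    have hH'card : H'.card ≤ t - 1 := by
      have e1 : (H.erase h1).card = H.card - 1 := Finset.card_erase_of_mem hh1H
      have e2 : H'.card = (H.erase h1).card - 1 :=
        Finset.card_erase_of_mem (Finset.mem_erase.mpr ⟨hne12.symm, hh2H⟩)
      omega
    set A : Finset ℕ := H'.image (fun x => (x.val.1 + 1) / 2) with hA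
    set Bc : Finset ℕ := H'.image (fun x => x.val.2) with hBc
    have hApos : ∃ a ∈ Finset.Icc 1 t, a ∉ A := by
      by_contra hc
      push_neg at hc
      have hsub : Finset.Icc 1 t ⊆ A := fun a ha => hc a ha
      have hc1 : t ≤ A.card := by
        have := Finset.card_le_card hsub
        simpa [Nat.card_Icc] using this
      have hc2 : A.card ≤ t - 1 := le_trans (Finset.card_image_le) hH'card
      omega
    have hBpos : ∃ b ∈ Finset.Icc 1 t, b ∉ Bc := by
      by_contra hc
      push_neg at hc
      have hsub : Finset.Icc 1 t ⊆ Bc := fun b hb => hc b hb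
      have hc1 : t ≤ Bc.card := by
        have := Finset.card_le_card hsub
        simpa [Nat.card_Icc] using this
      have hc2 : Bc.card ≤ t - 1 := le_trans (Finset.card_image_le) hH'card
      omega
    obtain ⟨a, haIcc, haA⟩ := hApos
    obtain ⟨b, hbIcc, hbB⟩ := hBpos
    rw [Finset.mem_Icc] at haIcc hbIcc
    obtain ⟨x, hxH, hx⟩ := hH (Sum.inl (⟨a - 1, by omega⟩, ⟨b - 1, by omega⟩))
    have hx' : (x.val.1 = 2*(a-1+1) - 1 ∨ x.val.1 = 2*(a-1+1)) ∧ x.val.2 ≤ 2*t+1 ∨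
        (x.val.2 = b-1+1 ∧ 1 ≤ x.val.1 ∧ x.val.1 ≤ 2*t) := hx
    have hax : a - 1 + 1 = a := by omega
    have hbx : b - 1 + 1 = b := by omega
    rw [hax, hbx] at hx'
    have hxne1 : x ≠ h1 := by
      intro h
      rw [h] at hx'
      rcases hx' with ⟨hr, _⟩ | ⟨_, _, hcl⟩ <;> omega
    have hxne2 : x ≠ h2 := by
      intro h
      rw [h] at hx'
      rcases hx' with ⟨_, hr⟩ | ⟨hc, _, _⟩ <;> omega
    have hxH' : x ∈ H' := by
      rw [hH']
      exact Finset.mem_erase.mpr ⟨hxne2, Finset.mem_erase.mpr ⟨hxne1, hxH⟩⟩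
    rcases hx' with ⟨hr, _⟩ | ⟨hc, _, _⟩
    · apply haA
      rw [hA]
      apply Finset.mem_image.mpr
      refine ⟨x, hxH', ?_⟩
      rcases hr with h | h <;> rw [h] <;> omega
    · apply hbB
      rw [hBc]
      apply Finset.mem_image.mpr
      exact ⟨x, hxH', hc⟩

end WallSection


section Transfer

lemma exists_snd_of_walk {γ : Type} {Gr : SimpleGraph γ} {x y : γ} (q : Gr.Walk x y)
    (hne : x ≠ y) (hnod : q.support.Nodup) :
    ∃ z : γ, Gr.Adj x z ∧ z ∈ q.support ∧ z ≠ x := by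
  cases q with
  | nil => exact absurd rfl hne
  | cons hadj q' =>
    rename_i w
    refine ⟨w, hadj, ?_, ?_⟩
    · rw [SimpleGraph.Walk.support_cons]
      exact List.mem_cons_of_mem _ q'.start_mem_support
    · rw [SimpleGraph.Walk.support_cons] at hnod
      intro he
      exact (List.nodup_cons.mp hnod).1 (he ▸ q'.start_mem_support)

lemma bramble_transfer {α β : Type} [DecidableEq β] (G : SimpleGraph α) (H : SimpleGraph β)
    (C : β → Set α) (v0 : β)
    (hconn : ∀ u, Conn G (C u))
    (hdisj : ∀ u v, u ≠ v → ∀ x, x ∈ C u → x ∈ C v → False)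
    (hadj : ∀ u v, H.Adj u v → ∃ a ∈ C u, ∃ b ∈ C v, G.Adj a b)
    {k : ℕ} (hbr : MyBramble H k) : MyBramble G k := by
  classical
  obtain ⟨κ, hfin, X, hconnX, htouch, horder⟩ := hbr
  refine ⟨κ, hfin, fun q => ⋃ u ∈ X q, C u, ?_, ?_, ?_⟩
  · intro q
    refine conn_biUnion (hconnX q) hconn ?_
    intro u v huv
    obtain ⟨a, ha, b, hb, hab⟩ := hadj u v huv
    exact ⟨a, ha, b, hb, Or.inr hab⟩
  · intro q q'
    obtain ⟨u, hu, v, hv, huv⟩ := htouch q q'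
    rcases huv with rfl | huv
    · obtain ⟨x, hx⟩ := (hconn u).1
      exact ⟨x, Set.mem_biUnion hu hx, x, Set.mem_biUnion hv hx, Or.inl rfl⟩
    · obtain ⟨a, ha, b, hb, hab⟩ := hadj u v huv
      exact ⟨a, Set.mem_biUnion hu ha, b, Set.mem_biUnion hv hb, Or.inr hab⟩
  · intro Hs hhit
    have hf : ∀ x : α, ∃ u : β, (∃ w, x ∈ C w) → x ∈ C u := by
      intro x
      by_cases h : ∃ w, x ∈ C w
      · obtain ⟨w, hw⟩ := h
        exact ⟨w, fun _ => hw⟩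
      · exact ⟨v0, fun hc => absurd hc h⟩
    choose f hfspec using hf
    refine le_trans (horder (Hs.image f) ?_) Finset.card_image_le
    intro q
    obtain ⟨x, hxH, hxm⟩ := hhit q
    obtain ⟨u, hu, hxu⟩ := Set.mem_iUnion₂.mp hxm
    refine ⟨f x, Finset.mem_image_of_mem f hxH, ?_⟩
    have hfx : x ∈ C (f x) := hfspec x ⟨u, hxu⟩
    by_cases hne : f x = u
    · rw [hne]; exact hu
    · exact absurd (hdisj _ _ hne x hfx hxu) not_false

lemma subdivision_branch {α β : Type} {G : SimpleGraph α} (W : G.Subgraph)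
    {H : SimpleGraph β} (enc : β → ℕ) (henc : Function.Injective enc)
    (hsub : IsSubdivisionOf W.coe H) :
    ∃ C : β → Set α,
      (∀ u, Conn G (C u)) ∧
      (∀ u v, u ≠ v → ∀ x, x ∈ C u → x ∈ C v → False) ∧
      (∀ u v, H.Adj u v → ∃ a ∈ C u, ∃ b ∈ C v, G.Adj a b) := by
  classical
  obtain ⟨b, p, hbinj, hpath, hrev, hbranch, hcross, hcover, hedges⟩ := hsub
  set C : β → Set α := fun u => {z | z = (b u).val ∨
    ∃ (v : β) (h : H.Adj u v), enc u < enc v ∧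
      ∃ w ∈ (p u v h).support, z = w.val ∧ w ≠ b u ∧ w ≠ b v} with hC
  have hmem_bu : ∀ u, (b u).val ∈ C u := fun u => Or.inl rfl
  have hint : ∀ (u v : β) (h : H.Adj u v), enc u < enc v →
      ∀ w ∈ (p u v h).support, w ≠ b v → w.val ∈ C u := by
    intro u v h hord w hw hwbv
    by_cases hwbu : w = b u
    · rw [hwbu]; exact hmem_bu u
    · exact Or.inr ⟨v, h, hord, w, hw, rfl, hwbu, hwbv⟩
  have hconn : ∀ u, Conn G (C u) := by
    intro u
    have key : ∀ z ∈ C u, ∃ q : G.Walk z ((b u).val), ∀ y ∈ q.support, y ∈ C u := by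
      intro z hz
      rcases hz with rfl | ⟨v, h, hord, w, hw, rfl, hwbu, hwbv⟩
      · refine ⟨SimpleGraph.Walk.nil, ?_⟩
        intro y hy
        rw [SimpleGraph.Walk.support_nil, List.mem_singleton] at hy
        rw [hy]; exact hmem_bu u
      · set q0 : W.coe.Walk (b u) w := (p u v h).takeUntil w hw with hq0
        have hnodup : ((p u v h).support).Nodup := (hpath u v h).support_nodup
        have hbv_not : b v ∉ q0.support := by
          intro hbv
          have hspec := (p u v h).take_spec hw
          have hsupp := congrArg SimpleGraph.Walk.support hspec
          rw [SimpleGraph.Walk.support_append] at hsupp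
          rw [← hsupp] at hnodup
          have hdisj' := (List.nodup_append'.mp hnodup).2.2
          have hbv2 : b v ∈ ((p u v h).dropUntil w hw).support.tail := by
            have hend : b v ∈ ((p u v h).dropUntil w hw).support :=
              SimpleGraph.Walk.end_mem_support _
            have hcons := SimpleGraph.Walk.support_eq_cons ((p u v h).dropUntil w hw)
            rw [hcons] at hend
            rcases List.mem_cons.mp hend with he | he
            · exact absurd he.symm hwbv
            · rw [hcons]; exact he
          exact hdisj' hbv hbv2
        have hsubC : ∀ x ∈ q0.support, x.val ∈ C u := by
          intro x hx
          refine hint u v h hord x ((p u v h).support_takeUntil_subset hw hx) ?_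
          intro hxbv
          rw [hxbv] at hx
          exact hbv_not hx
        refine ⟨(q0.reverse.map W.hom), ?_⟩
        intro y hy
        have hy' : y ∈ (q0.reverse.map W.hom).support := hy
        rw [SimpleGraph.Walk.support_map] at hy'
        obtain ⟨x, hx, rfl⟩ := List.mem_map.mp hy'
        rw [SimpleGraph.Walk.support_reverse, List.mem_reverse] at hx
        exact hsubC x hx
    refine ⟨⟨(b u).val, hmem_bu u⟩, ?_⟩
    intro x hx y hy
    obtain ⟨qx, hqx⟩ := key x hx
    obtain ⟨qy, hqy⟩ := key y hy
    refine ⟨qx.append qy.reverse, ?_⟩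
    intro z hz
    rw [SimpleGraph.Walk.mem_support_append_iff] at hz
    rcases hz with hz | hz
    · exact hqx z hz
    · rw [SimpleGraph.Walk.support_reverse, List.mem_reverse] at hz
      exact hqy z hz
  have hdisjC : ∀ u v, u ≠ v → ∀ x, x ∈ C u → x ∈ C v → False := by
    intro u v hne x hxu hxv
    rcases hxu with h1 | ⟨u₂, hu₂, hord1, w, hw, heq1, hwbu, hwbu₂⟩
    · rcases hxv with h2 | ⟨v₂, hv₂, hord2, w', hw', heq2, hwbv, hwbv₂⟩
      · exact hne (hbinj (Subtype.val_injective (h1.symm.trans h2)))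
      · have hwbu' : w' = b u := Subtype.val_injective (heq2.symm.trans h1)
        rw [hwbu'] at hw'
        rcases hbranch v v₂ hv₂ u hw' with rfl | rfl
        · exact hne rfl
        · exact hwbv₂ hwbu'
    · rcases hxv with h2 | ⟨v₂, hv₂, hord2, w', hw', heq2, hwbv, hwbv₂⟩
      · have hwbv' : w = b v := Subtype.val_injective (heq1.symm.trans h2)
        rw [hwbv'] at hw
        rcases hbranch u u₂ hu₂ v hw with rfl | rfl
        · exact hne rfl
        · exact hwbu₂ hwbv'
      · have hww : w' = w := Subtype.val_injective (heq2.symm.trans heq1)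
        rw [hww] at hw' hwbv hwbv₂
        by_cases hE : s(u, u₂) = s(v, v₂)
        · rcases Sym2.eq_iff.mp hE with ⟨rfl, rfl⟩ | ⟨rfl, rfl⟩
          · exact hne rfl
          · omega
        · rcases hcross u u₂ hu₂ v v₂ hv₂ hE w hw hw' with h | h
          · exact hwbu h
          · exact hwbu₂ h
  have haux : ∀ (u v : β) (h : H.Adj u v), enc u < enc v →
      ∃ a ∈ C u, G.Adj a (b v).val := by
    intro u v h hord
    have hbne : b v ≠ b u := by
      intro he
      exact h.ne (hbinj he).symm
    have hnod : ((p u v h).reverse).support.Nodup :=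
      ((hpath u v h).reverse).support_nodup
    obtain ⟨z, hadjz, hzsup, hzne⟩ := exists_snd_of_walk ((p u v h).reverse) hbne hnod
    rw [SimpleGraph.Walk.support_reverse, List.mem_reverse] at hzsup
    refine ⟨z.val, hint u v h hord z hzsup hzne, ?_⟩
    exact (W.adj_sub hadjz).symm
  refine ⟨C, hconn, hdisjC, ?_⟩
  intro u v h
  rcases lt_trichotomy (enc u) (enc v) with hlt | heq | hgt
  · obtain ⟨a, ha, hadj'⟩ := haux u v h hlt
    exact ⟨a, ha, (b v).val, hmem_bu v, hadj'⟩
  · exact absurd (henc heq) h.ne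
  · obtain ⟨a, ha, hadj'⟩ := haux v u h.symm hgt
    exact ⟨(b u).val, hmem_bu u, a, ha, hadj'.symm⟩

end Transfer


/-- If `B` is a strong `W_{≤t}`-backdoor set of `F` and `W` a subgraph of
`inc(F)` that is a subdivision of the `(2t+2)`-wall with `V(W) ∩ B = ∅`, then some `x ∈ B`
kills `W` externally: `W` contains a clause `c` with `x ∈ lit(c)` and a clause `c'` with
`¬x ∈ lit(c')`. -/
theorem stmt15 {V : Type} [DecidableEq V] (t : ℕ) (F : CNF V) (B : Finset V)
    (hB : F.strongBackdoor t B) (W : F.inc.Subgraph)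
    (hW : IsSubdivisionOf W.coe (Wall (2 * t + 2)))
    (hWB : ∀ b ∈ B, Sum.inl b ∉ W.verts) :
    ∃ x ∈ B, ∃ c c' : F.ι, Sum.inr c ∈ W.verts ∧ Sum.inr c' ∈ W.verts ∧
      (x, true) ∈ F.lit c ∧ (x, false) ∈ F.lit c' := by
  classical
  by_contra hcon
  push_neg at hcon
  -- the assignment: set x to false iff x appears positively in some clause of W
  set τ : V → Bool := fun y =>
    if ∃ c : F.ι, Sum.inr c ∈ W.verts ∧ (y, true) ∈ F.lit c then false else true with hτ
  have hsurv : ∀ i : F.ι, Sum.inr i ∈ W.verts → ∀ l ∈ F.lit i, l.1 ∈ B → τ l.1 ≠ l.2 := by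
    intro i hiW l hl hlB
    rcases l with ⟨y, bb⟩
    cases bb
    · -- negative literal :  τ y must be true
      have hno : ¬ ∃ c : F.ι, Sum.inr c ∈ W.verts ∧ (y, true) ∈ F.lit c := by
        rintro ⟨c, hcW, hcp⟩
        exact hcon y hlB c i hcW hiW hcp hl
      simp only [hτ, if_neg hno]
      exact fun h => by cases h
    · -- positive literal : τ y must be false
      have hyes : ∃ c : F.ι, Sum.inr c ∈ W.verts ∧ (y, true) ∈ F.lit c := ⟨i, hiW, hl⟩
      simp only [hτ, if_pos hyes]
      exact fun h => by cases h
  have hWadj : ∀ {a b : V ⊕ F.ι}, W.Adj a b → ((F.reduce B τ).inc).Adj a b := by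
    intro a b hab
    have havert : a ∈ W.verts := W.edge_vert hab
    have hbvert : b ∈ W.verts := W.edge_vert hab.symm
    have hF : (F.inc).Adj a b := W.adj_sub hab
    rw [CNF.inc, SimpleGraph.fromRel_adj] at hF
    refine (SimpleGraph.fromRel_adj _ a b).mpr ?_
    obtain ⟨hne, hrel⟩ := hF
    refine ⟨hne, ?_⟩
    have key : ∀ (x : V) (i : F.ι), Sum.inl x ∈ W.verts → Sum.inr i ∈ W.verts →
        (i ∈ F.cls ∧ ((x, true) ∈ F.lit i ∨ (x, false) ∈ F.lit i)) →
        (i ∈ (F.reduce B τ).cls ∧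
          ((x, true) ∈ (F.reduce B τ).lit i ∨ (x, false) ∈ (F.reduce B τ).lit i)) := by
      intro x i hxW hiW ⟨hicls, hxl⟩
      have hxB : x ∉ B := fun hxB => hWB x hxB hxW
      constructor
      · show i ∈ F.cls.filter _
        rw [Finset.mem_filter]
        refine ⟨hicls, ?_⟩
        intro l hl hlB
        exact hsurv i hiW l hl hlB
      · rcases hxl with hx | hx
        · left
          show _ ∈ (F.lit i).filter _
          rw [Finset.mem_filter]
          exact ⟨hx, hxB⟩
        · right
          show _ ∈ (F.lit i).filter _
          rw [Finset.mem_filter]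
          exact ⟨hx, hxB⟩
    rcases hrel with hrel | hrel
    · left
      match a, b, hrel with
      | Sum.inl x, Sum.inr i, hrel => exact key x i havert hbvert hrel
    · right
      match b, a, hrel with
      | Sum.inl x, Sum.inr i, hrel => exact key x i hbvert havert hrel
  set W' : ((F.reduce B τ).inc).Subgraph :=
    { verts := W.verts
      Adj := W.Adj
      adj_sub := fun h => hWadj h
      edge_vert := fun h => W.edge_vert h
      symm := W.symm } with hW'def
  have hW' : IsSubdivisionOf W'.coe (Wall (2 * t + 2)) := hW
  have henc : Function.Injective
      (fun u : wallVerts (2*t+2) => Nat.pair u.val.1 u.val.2) := by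
    intro a b h
    obtain ⟨h1, h2⟩ := Nat.pair_eq_pair.mp h
    apply Subtype.ext
    exact Prod.ext h1 h2
  obtain ⟨C, hconnC, hdisjC, hadjC⟩ := subdivision_branch W'
    (fun u : wallVerts (2*t+2) => Nat.pair u.val.1 u.val.2) henc hW'
  have hv11 : ((1, 1) : ℕ × ℕ) ∈ wallVerts (2*t+2) :=
    mem_wallVerts (by omega) (by omega) (by omega) (by omega)
  have hbrG : MyBramble ((F.reduce B τ).inc) (t+2) :=
    bramble_transfer _ (Wall (2*t+2)) C ⟨(1,1), hv11⟩ hconnC hdisjC hadjC (wall_bramble t)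
  have hbound := bramble_bound hbrG (hB.2 τ)
  omega
end
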